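/- (Bianchi identity, first part) For any connection φ for a sub vector bundle F of TM, with curvature R and cocurvature R̄, the Frölicher–Nijenhuis bracket satisfies [R + R̄, φ] = 0. -/

import Mathlib

/-!
Graded derivations of the algebra of differential forms associated with a connection
(P. Michor).  We model vector fields on a smooth manifold `M` as derivations of the
commutative `ℝ`-algebra `A = C^∞(M, ℝ)` (realized inside `Module.End ℝ A`), and
differential forms (scalar valued, resp. tangent-bundle valued) as functions on lists of
vector fields which are alternating `A`-multilinear of a fixed degree.  All the operators
of the Frölicher-Nijenhuis calculus are defined by their classical global formulas.
-/

noncomputable section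

open scoped Manifold

variable (A : Type*) [CommRing A] [Algebra ℝ A]

/-- The carrier in which vector fields live: `ℝ`-linear endomorphisms of the functions. -/
abbrev Vec := Module.End ℝ A

/-- A vector field is a derivation of the algebra of (smooth) functions. -/
def IsVectorField (X : Vec A) : Prop := ∀ f g : A, X (f * g) = f * X g + g * X f

/-- Raw scalar differential forms: functions on lists of vector fields. -/
abbrev SF := List (Vec A) → A

/-- Raw tangent-bundle valued differential forms. -/
abbrev VF := List (Vec A) → Vec A

/-- All members of the list are genuine vector fields. -/
def VFList (ℓ : List (Vec A)) : Prop := ∀ X ∈ ℓ, IsVectorField A X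

/-- `ω` is a (scalar valued) differential `p`-form: it is supported on lists of length
`p`, it is `A`-multilinear and alternating (on vector fields). -/
structure IsSForm (p : ℕ) (ω : SF A) : Prop where
  support : ∀ ℓ, ℓ.length ≠ p → ω ℓ = 0
  map_add : ∀ l₁ (X Y : Vec A) l₂, VFList A l₁ → VFList A l₂ →
    IsVectorField A X → IsVectorField A Y →
    ω (l₁ ++ (X + Y) :: l₂) = ω (l₁ ++ X :: l₂) + ω (l₁ ++ Y :: l₂)
  map_smul : ∀ l₁ (f : A) (X : Vec A) l₂, VFList A l₁ → VFList A l₂ →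
    IsVectorField A X → ω (l₁ ++ (f • X) :: l₂) = f * ω (l₁ ++ X :: l₂)
  alternate : ∀ l₁ (X : Vec A) l₂ l₃, VFList A l₁ → VFList A l₂ → VFList A l₃ →
    IsVectorField A X → ω (l₁ ++ X :: l₂ ++ X :: l₃) = 0

/-- `K` is a tangent-bundle valued differential `p`-form, `K ∈ Ω^p(M; TM)`. -/
structure IsVForm (p : ℕ) (K : VF A) : Prop where
  support : ∀ ℓ, ℓ.length ≠ p → K ℓ = 0
  map_add : ∀ l₁ (X Y : Vec A) l₂, VFList A l₁ → VFList A l₂ →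
    IsVectorField A X → IsVectorField A Y →
    K (l₁ ++ (X + Y) :: l₂) = K (l₁ ++ X :: l₂) + K (l₁ ++ Y :: l₂)
  map_smul : ∀ l₁ (f : A) (X : Vec A) l₂, VFList A l₁ → VFList A l₂ →
    IsVectorField A X → K (l₁ ++ (f • X) :: l₂) = f • K (l₁ ++ X :: l₂)
  alternate : ∀ l₁ (X : Vec A) l₂ l₃, VFList A l₁ → VFList A l₂ → VFList A l₃ →
    IsVectorField A X → K (l₁ ++ X :: l₂ ++ X :: l₃) = 0
  vec : ∀ ℓ, VFList A ℓ → IsVectorField A (K ℓ)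

/-- A connection for a sub vector bundle `F ⊆ TM`:  a fiber linear projection
`φ : TM → F`, i.e. an idempotent `A`-linear operator on vector fields (whose image is the
space of sections of `F`). -/
structure IsConnection (φ : Vec A → Vec A) : Prop where
  vf : ∀ X, IsVectorField A X → IsVectorField A (φ X)
  idem : ∀ X, IsVectorField A X → φ (φ X) = φ X
  map_add : ∀ X Y, IsVectorField A X → IsVectorField A Y → φ (X + Y) = φ X + φ Y
  map_smul : ∀ (f : A) (X : Vec A), IsVectorField A X → φ (f • X) = f • φ X

/-- The horizontal projection `h = Id - φ` of a connection `φ`. -/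
def hpr (φ : Vec A → Vec A) : Vec A → Vec A := fun X => X - φ X

/-- A bundle endomorphism of `TM` (e.g. `φ` or `h`) viewed as a `1`-form in `Ω¹(M;TM)`. -/
def oneF (φ : Vec A → Vec A) : VF A := fun ℓ => match ℓ with
  | [X] => φ X
  | _ => 0

/-- The curvature `R ∈ Ω²(M;TM)` of the connection, `R(X,Y) = φ [hX, hY]`. -/
def curv (φ : Vec A → Vec A) : VF A := fun ℓ => match ℓ with
  | [X, Y] => φ ⁅hpr A φ X, hpr A φ Y⁆
  | _ => 0

/-- The cocurvature `R̄ ∈ Ω²(M;TM)` of the connection, `R̄(X,Y) = h [φX, φY]`. -/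
def cocurv (φ : Vec A → Vec A) : VF A := fun ℓ => match ℓ with
  | [X, Y] => hpr A φ ⁅φ X, φ Y⁆
  | _ => 0

/-- `h* : Ω(M) → Ω(M)`, `(h*ω)(X₁,…,X_p) = ω(hX₁,…,hX_p)`. -/
def hstar (φ : Vec A → Vec A) : SF A →ₗ[ℝ] SF A :=
  LinearMap.pi fun ℓ => LinearMap.proj (ℓ.map (hpr A φ))

/-- The exterior derivative, by the global (Koszul) formula. -/
def extd : SF A →ₗ[ℝ] SF A :=
  LinearMap.pi fun ℓ =>
    (∑ i : Fin ℓ.length, ((-1 : ℝ) ^ (i : ℕ)) •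
      ((ℓ.get i) ∘ₗ (LinearMap.proj (ℓ.eraseIdx (i : ℕ)) : SF A →ₗ[ℝ] A)))
    + ∑ i : Fin ℓ.length,
        ∑ j ∈ Finset.univ.filter (fun j : Fin ℓ.length => (i : ℕ) < (j : ℕ)),
          ((-1 : ℝ) ^ ((i : ℕ) + (j : ℕ))) •
            (LinearMap.proj ((⁅ℓ.get i, ℓ.get j⁆ : Vec A) ::
              ((ℓ.eraseIdx (j : ℕ)).eraseIdx (i : ℕ))) : SF A →ₗ[ℝ] A)

/-- The insertion operator `i(K) : Ω^p(M) → Ω^{p+k-1}(M)` of `K ∈ Ω^k(M;TM)`: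
`(i(K)ω)(X₁,…,X_n) = 1/(k! (n-k)!) ∑_σ ε(σ) ω(K(X_{σ1},…,X_{σk}), X_{σ(k+1)},…)`. -/
def insS (k : ℕ) (K : VF A) : SF A →ₗ[ℝ] SF A :=
  LinearMap.pi fun ℓ =>
    if hk : k ≤ ℓ.length then
      (((k.factorial * (ℓ.length - k).factorial : ℕ) : ℝ))⁻¹ •
        ∑ σ : Equiv.Perm (Fin ℓ.length),
          (((Equiv.Perm.sign σ : ℤ) : ℝ)) •
            (LinearMap.proj
              ((K (List.ofFn fun m : Fin k => ℓ.get (σ (Fin.castLE hk m)))) ::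
                List.ofFn fun m : Fin (ℓ.length - k) =>
                  ℓ.get (σ ⟨k + (m : ℕ), by have := m.isLt; omega⟩)) : SF A →ₗ[ℝ] A)
    else 0

/-- The insertion operator over `h*`:  `i^h(K)` of `K ∈ Ω^k(M;TM)`, given by
`(i^h(K)ω)(X₁,…,X_n) = 1/(k! (n-k)!) ∑_σ ε(σ) ω(K(X_{σ1},…,X_{σk}), hX_{σ(k+1)},…)`. -/
def insH (φ : Vec A → Vec A) (k : ℕ) (K : VF A) : SF A →ₗ[ℝ] SF A :=
  LinearMap.pi fun ℓ =>
    if hk : k ≤ ℓ.length then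
      (((k.factorial * (ℓ.length - k).factorial : ℕ) : ℝ))⁻¹ •
        ∑ σ : Equiv.Perm (Fin ℓ.length),
          (((Equiv.Perm.sign σ : ℤ) : ℝ)) •
            (LinearMap.proj
              ((K (List.ofFn fun m : Fin k => ℓ.get (σ (Fin.castLE hk m)))) ::
                List.ofFn fun m : Fin (ℓ.length - k) =>
                  hpr A φ (ℓ.get (σ ⟨k + (m : ℕ), by have := m.isLt; omega⟩))) : SF A →ₗ[ℝ] A)
    else 0

/-- Insertion `i(K)T` of `K ∈ Ω^k(M;TM)` into a vector valued form `T`. -/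
def insVV (k : ℕ) (K : VF A) (T : VF A) : VF A := fun ℓ =>
  if hk : k ≤ ℓ.length then
    (((k.factorial * (ℓ.length - k).factorial : ℕ) : ℝ))⁻¹ •
      ∑ σ : Equiv.Perm (Fin ℓ.length),
        (((Equiv.Perm.sign σ : ℤ) : ℝ)) •
          T ((K (List.ofFn fun m : Fin k => ℓ.get (σ (Fin.castLE hk m)))) ::
              List.ofFn fun m : Fin (ℓ.length - k) =>
                ℓ.get (σ ⟨k + (m : ℕ), by have := m.isLt; omega⟩))
  else 0

/-- Insertion over `h*`, `i^h(K)T`, of `K ∈ Ω^k(M;TM)` into a vector valued form `T`. -/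
def insHVV (φ : Vec A → Vec A) (k : ℕ) (K : VF A) (T : VF A) : VF A := fun ℓ =>
  if hk : k ≤ ℓ.length then
    (((k.factorial * (ℓ.length - k).factorial : ℕ) : ℝ))⁻¹ •
      ∑ σ : Equiv.Perm (Fin ℓ.length),
        (((Equiv.Perm.sign σ : ℤ) : ℝ)) •
          T ((K (List.ofFn fun m : Fin k => ℓ.get (σ (Fin.castLE hk m)))) ::
              List.ofFn fun m : Fin (ℓ.length - k) =>
                hpr A φ (ℓ.get (σ ⟨k + (m : ℕ), by have := m.isLt; omega⟩)))
  else 0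

/-- The Lie derivative `Θ(K) = [i(K), d]` along `K ∈ Ω^k(M;TM)`. -/
def theta (k : ℕ) (K : VF A) : SF A →ₗ[ℝ] SF A :=
  insS A k K ∘ₗ extd A - ((-1 : ℝ) ^ (k + 1)) • (extd A ∘ₗ insS A k K)

/-- `Θ^h(K) = h* ∘ Θ(K) ∘ h*`. -/
def thetaH (φ : Vec A → Vec A) (k : ℕ) (K : VF A) : SF A →ₗ[ℝ] SF A :=
  hstar A φ ∘ₗ theta A k K ∘ₗ hstar A φ

/-- A function, viewed as a `0`-form. -/
def constF : A →ₗ[ℝ] SF A where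
  toFun f := fun ℓ => match ℓ with
    | [] => f
    | _ => 0
  map_add' f g := by funext ℓ; cases ℓ <;> simp
  map_smul' r f := by funext ℓ; cases ℓ <;> simp

/-- The Frölicher-Nijenhuis bracket `[K, L] ∈ Ω^{k+l}(M;TM)` of `K ∈ Ω^k(M;TM)` and
`L ∈ Ω^l(M;TM)`, characterized by `Θ([K,L]) = [Θ(K), Θ(L)]` via
`[K,L](X₁,…,X_{k+l}) f = ([Θ(K),Θ(L)] f)(X₁,…,X_{k+l})`. -/
def fnb (k l : ℕ) (K L : VF A) : VF A := fun ℓ =>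
  LinearMap.proj ℓ ∘ₗ
    (theta A k K ∘ₗ theta A l L - ((-1 : ℝ) ^ (k * l)) • (theta A l L ∘ₗ theta A k K)) ∘ₗ
      constF A

/-- Wedge product of a scalar `p`-form with a scalar form. -/
def wedgeSS (p : ℕ) (ω ψ : SF A) : SF A := fun ℓ =>
  if hp : p ≤ ℓ.length then
    (((p.factorial * (ℓ.length - p).factorial : ℕ) : ℝ))⁻¹ •
      ∑ σ : Equiv.Perm (Fin ℓ.length),
        (((Equiv.Perm.sign σ : ℤ) : ℝ)) •
          (ω (List.ofFn fun m : Fin p => ℓ.get (σ (Fin.castLE hp m))) *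
            ψ (List.ofFn fun m : Fin (ℓ.length - p) =>
                ℓ.get (σ ⟨p + (m : ℕ), by have := m.isLt; omega⟩)))
  else 0

/-- Wedge product of a scalar `p`-form with a vector valued form. -/
def wedgeSV (p : ℕ) (ω : SF A) (K : VF A) : VF A := fun ℓ =>
  if hp : p ≤ ℓ.length then
    (((p.factorial * (ℓ.length - p).factorial : ℕ) : ℝ))⁻¹ •
      ∑ σ : Equiv.Perm (Fin ℓ.length),
        (((Equiv.Perm.sign σ : ℤ) : ℝ)) •
          (ω (List.ofFn fun m : Fin p => ℓ.get (σ (Fin.castLE hp m))) •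
            K (List.ofFn fun m : Fin (ℓ.length - p) =>
                ℓ.get (σ ⟨p + (m : ℕ), by have := m.isLt; omega⟩)))
  else 0

/-- `K ∘ Λh`: precompose each argument of a vector valued form with `h`. -/
def precH (φ : Vec A → Vec A) (K : VF A) : VF A := fun ℓ => K (ℓ.map (hpr A φ))

/-- `h ∘ K`: postcompose the values of a vector valued form with `h`. -/
def postH (φ : Vec A → Vec A) (K : VF A) : VF A := fun ℓ => hpr A φ (K ℓ)

/-- `φ ∘ K`: postcompose the values of a vector valued form with `φ`. -/
def postP (φ : Vec A → Vec A) (K : VF A) : VF A := fun ℓ => φ (K ℓ)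

/-- Equality of vector valued forms (tested on vector fields). -/
def VEq (K L : VF A) : Prop := ∀ ℓ, VFList A ℓ → K ℓ = L ℓ

/-- Equality of operators on `Ω(M)` (tested on genuine forms and vector fields). -/
def OpEq (D₁ D₂ : SF A →ₗ[ℝ] SF A) : Prop :=
  ∀ (p : ℕ) (ω : SF A), IsSForm A p ω → ∀ ℓ, VFList A ℓ → D₁ ω ℓ = D₂ ω ℓ

/-- A scalar form is horizontal: it is killed by insertion of any vertical vector. -/
def HorS (φ : Vec A → Vec A) (ω : SF A) : Prop :=
  ∀ l₁ (Y : Vec A) l₂, IsVectorField A Y → ω (l₁ ++ φ Y :: l₂) = 0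

/-- A vector valued form is horizontal: it is killed by any vertical argument. -/
def HorV (φ : Vec A → Vec A) (K : VF A) : Prop :=
  ∀ l₁ (Y : Vec A) l₂, IsVectorField A Y → K (l₁ ++ φ Y :: l₂) = 0

/-- `K ∈ Ω^k(M;TM)^h`, i.e. `h ∘ K = K ∘ Λ^k h`. -/
def EquivH (φ : Vec A → Vec A) (K : VF A) : Prop :=
  ∀ ℓ, VFList A ℓ → hpr A φ (K ℓ) = K (ℓ.map (hpr A φ))

/-- `D` is a graded derivation of `Ω(M)` over `h*` of degree `k`:
`D(ω ∧ ψ) = Dω ∧ h*ψ + (-1)^{k·|ω|} h*ω ∧ Dψ`. -/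
structure IsDerOverH (φ : Vec A → Vec A) (k : ℕ) (D : SF A →ₗ[ℝ] SF A) : Prop where
  degree : ∀ p ω, IsSForm A p ω → IsSForm A (p + k) (D ω)
  leibniz : ∀ (p q : ℕ) (ω ψ : SF A), IsSForm A p ω → IsSForm A q ψ →
    D (wedgeSS A p ω ψ) = wedgeSS A (p + k) (D ω) (hstar A φ ψ)
      + ((-1 : ℝ) ^ (k * p)) • wedgeSS A p (hstar A φ ω) (D ψ)

/-- `D` commutes with `h*` (i.e. `[D, h*] = 0` on `Ω(M)`). -/
def CommutesWithHstar (φ : Vec A → Vec A) (D : SF A →ₗ[ℝ] SF A) : Prop :=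
  ∀ (p : ℕ) (ω : SF A), IsSForm A p ω → ∀ ℓ, VFList A ℓ →
    D (hstar A φ ω) ℓ = hstar A φ (D ω) ℓ

/-- `D` is algebraic: it vanishes on `Ω⁰(M)`. -/
def AlgebraicDer (D : SF A →ₗ[ℝ] SF A) : Prop := ∀ ω : SF A, IsSForm A 0 ω → D ω = 0

/-- The bracket `[K,L]^{∧,h} = i^h(K)L - (-1)^{kl} i^h(L)K` on `Ω^{*+1}(M;TM)^h`,
for `K ∈ Ω^{k+1}(M;TM)^h` and `L ∈ Ω^{l+1}(M;TM)^h`. -/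
def hookBr (φ : Vec A → Vec A) (k l : ℕ) (K L : VF A) : VF A :=
  insHVV A φ (k + 1) K L - ((-1 : ℝ) ^ (k * l)) • insHVV A φ (l + 1) L K

/-- The classical covariant derivative `D^h = h* ∘ d`. -/
def covD (φ : Vec A → Vec A) : SF A →ₗ[ℝ] SF A := hstar A φ ∘ₗ extd A

/-- The covariant derivative `d^h = h* ∘ d ∘ h*`. -/
def covd (φ : Vec A → Vec A) : SF A →ₗ[ℝ] SF A := hstar A φ ∘ₗ extd A ∘ₗ hstar A φ

end

/-- The commutative `ℝ`-algebra of smooth real valued functions on a manifold `M`. -/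
abbrev SmoothFns {EM : Type*} [NormedAddCommGroup EM] [NormedSpace ℝ EM]
    {HM : Type*} [TopologicalSpace HM] (IM : ModelWithCorners ℝ EM HM)
    (M : Type*) [TopologicalSpace M] [ChartedSpace HM M] : Type _ :=
  ContMDiffMap IM (modelWithCornersSelf ℝ ℝ) M ℝ (⊤ : ℕ∞)

attribute [local instance] LieRing.ofAssociativeRing

section Work
variable {A : Type*} [CommRing A] [Algebra ℝ A]

lemma vf_zero : IsVectorField A 0 := by intro f g; simp

lemma vf_add {X Y : Vec A} (hX : IsVectorField A X) (hY : IsVectorField A Y) :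
    IsVectorField A (X + Y) := by
  intro f g; simp [hX f g, hY f g]; ring

lemma vf_Asmul (c : A) {X : Vec A} (hX : IsVectorField A X) :
    IsVectorField A (c • X) := by
  intro f g; simp [hX f g]; ring

lemma vf_neg {X : Vec A} (hX : IsVectorField A X) : IsVectorField A (-X) := by
  intro f g; simp [hX f g]; ring

lemma vf_sub {X Y : Vec A} (hX : IsVectorField A X) (hY : IsVectorField A Y) :
    IsVectorField A (X - Y) := by
  intro f g; simp [hX f g, hY f g]; ring

lemma lie_app (X Y : Vec A) (f : A) : ⁅X, Y⁆ f = X (Y f) - Y (X f) := by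
  simp [Ring.lie_def, LinearMap.sub_apply, Module.End.mul_apply]

lemma vf_bracket {X Y : Vec A} (hX : IsVectorField A X) (hY : IsVectorField A Y) :
    IsVectorField A ⁅X, Y⁆ := by
  intro f g
  simp only [lie_app]
  rw [hY f g, hX f g, map_add X, map_add Y, hX f (Y g), hX g (Y f), hY f (X g), hY g (X f)]
  ring

lemma neg_eq_Asmul (X : Vec A) : -X = (-1 : A) • X := by
  ext g; simp

section Conn
variable {φ : Vec A → Vec A} (hφ : IsConnection A φ)
include hφ

lemma phi_zero : φ 0 = 0 := by
  have := hφ.map_smul 0 0 vf_zero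
  simpa using this

lemma phi_neg {X : Vec A} (hX : IsVectorField A X) : φ (-X) = -φ X := by
  rw [neg_eq_Asmul, hφ.map_smul _ _ hX, neg_eq_Asmul]

lemma phi_sub {X Y : Vec A} (hX : IsVectorField A X) (hY : IsVectorField A Y) :
    φ (X - Y) = φ X - φ Y := by
  rw [sub_eq_add_neg, hφ.map_add _ _ hX (vf_neg hY), phi_neg hφ hY, sub_eq_add_neg]

lemma vf_hpr {X : Vec A} (hX : IsVectorField A X) : IsVectorField A (hpr A φ X) :=
  vf_sub hX (hφ.vf X hX)

lemma phi_hpr {X : Vec A} (hX : IsVectorField A X) : φ (hpr A φ X) = 0 := by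
  rw [hpr, phi_sub hφ hX (hφ.vf X hX), hφ.idem X hX, sub_self]

lemma hpr_phi {X : Vec A} (hX : IsVectorField A X) : hpr A φ (φ X) = 0 := by
  rw [hpr, hφ.idem X hX, sub_self]

end Conn
end Work
section Work2
variable {A : Type*} [CommRing A] [Algebra ℝ A]

lemma vfl_nil : VFList A [] := by intro x hx; simp at hx

lemma vfl_cons {x : Vec A} {l : List (Vec A)} :
    VFList A (x :: l) ↔ IsVectorField A x ∧ VFList A l := by
  simp [VFList]

lemma vfl_sublist {l l' : List (Vec A)} (h : List.Sublist l' l) (hl : VFList A l) : VFList A l' :=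
  fun x hx => hl x (h.subset hx)

lemma vfl_append {l l' : List (Vec A)} (hl : VFList A l) (hl' : VFList A l') :
    VFList A (l ++ l') := by
  intro x hx
  rcases List.mem_append.1 hx with h | h
  · exact hl x h
  · exact hl' x h

section Conn
variable {φ : Vec A → Vec A} (hφ : IsConnection A φ)
include hφ

lemma Kv_apply {X Y : Vec A} (hX : IsVectorField A X) (hY : IsVectorField A Y) :
    (curv A φ + cocurv A φ) [X, Y]
      = φ ⁅X, Y⁆ - φ ⁅φ X, Y⁆ - φ ⁅X, φ Y⁆ + ⁅φ X, φ Y⁆ := by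
  show curv A φ [X, Y] + cocurv A φ [X, Y] = _
  have hpX := hφ.vf X hX
  have hpY := hφ.vf Y hY
  have h1 : ⁅hpr A φ X, hpr A φ Y⁆
      = (⁅X, Y⁆ - ⁅φ X, Y⁆) - (⁅X, φ Y⁆ - ⁅φ X, φ Y⁆) := by
    simp only [hpr, sub_lie, lie_sub]
  have hb : ∀ U V : Vec A, IsVectorField A U → IsVectorField A V →
      IsVectorField A ⁅U, V⁆ := fun _ _ hU hV => vf_bracket hU hV
  show φ ⁅hpr A φ X, hpr A φ Y⁆ + hpr A φ ⁅φ X, φ Y⁆ = _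
  rw [h1, phi_sub hφ (vf_sub (hb _ _ hX hY) (hb _ _ hpX hY))
        (vf_sub (hb _ _ hX hpY) (hb _ _ hpX hpY)),
      phi_sub hφ (hb _ _ hX hY) (hb _ _ hpX hY),
      phi_sub hφ (hb _ _ hX hpY) (hb _ _ hpX hpY)]
  show _ + (⁅φ X, φ Y⁆ - φ ⁅φ X, φ Y⁆) = _
  abel

lemma phiKv_apply {X Y : Vec A} (hX : IsVectorField A X) (hY : IsVectorField A Y) :
    φ ((curv A φ + cocurv A φ) [X, Y])
      = φ ⁅X, Y⁆ - φ ⁅φ X, Y⁆ - φ ⁅X, φ Y⁆ + φ ⁅φ X, φ Y⁆ := by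
  rw [Kv_apply hφ hX hY]
  have hpX := hφ.vf X hX
  have hpY := hφ.vf Y hY
  have hb : ∀ U V : Vec A, IsVectorField A U → IsVectorField A V →
      IsVectorField A ⁅U, V⁆ := fun _ _ hU hV => vf_bracket hU hV
  have e : φ ⁅X, Y⁆ - φ ⁅φ X, Y⁆ - φ ⁅X, φ Y⁆ + ⁅φ X, φ Y⁆
      = (φ ⁅X, Y⁆ - φ ⁅φ X, Y⁆) - (φ ⁅X, φ Y⁆ - ⁅φ X, φ Y⁆) := by
    abel
  rw [e, phi_sub hφ (vf_sub (hφ.vf _ (hb _ _ hX hY)) (hφ.vf _ (hb _ _ hpX hY)))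
      (vf_sub (hφ.vf _ (hb _ _ hX hpY)) (hb _ _ hpX hpY)),
    phi_sub hφ (hφ.vf _ (hb _ _ hX hY)) (hφ.vf _ (hb _ _ hpX hY)),
    phi_sub hφ (hφ.vf _ (hb _ _ hX hpY)) (hb _ _ hpX hpY),
    hφ.idem _ (hb _ _ hX hY), hφ.idem _ (hb _ _ hpX hY), hφ.idem _ (hb _ _ hX hpY)]
  abel

lemma Kv_antisym {X Y : Vec A} (hX : IsVectorField A X) (hY : IsVectorField A Y) :
    (curv A φ + cocurv A φ) [Y, X] = -((curv A φ + cocurv A φ) [X, Y]) := by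
  rw [Kv_apply hφ hY hX, Kv_apply hφ hX hY]
  have hpX := hφ.vf X hX
  have hpY := hφ.vf Y hY
  have hb : ∀ U V : Vec A, IsVectorField A U → IsVectorField A V →
      IsVectorField A ⁅U, V⁆ := fun _ _ hU hV => vf_bracket hU hV
  have e1 : ⁅Y, X⁆ = -⁅X, Y⁆ := by rw [← lie_skew]
  have e2 : ⁅φ Y, X⁆ = -⁅X, φ Y⁆ := by rw [← lie_skew]
  have e3 : ⁅Y, φ X⁆ = -⁅φ X, Y⁆ := by rw [← lie_skew]
  have e4 : ⁅φ Y, φ X⁆ = -⁅φ X, φ Y⁆ := by rw [← lie_skew]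
  rw [e1, e2, e3, e4, phi_neg hφ (hb _ _ hX hY), phi_neg hφ (hb _ _ hX hpY),
    phi_neg hφ (hb _ _ hpX hY)]
  abel

lemma Kv_neg_left {U V : Vec A} (hU : IsVectorField A U) (hV : IsVectorField A V) :
    (curv A φ + cocurv A φ) [-U, V] = -((curv A φ + cocurv A φ) [U, V]) := by
  rw [Kv_apply hφ (vf_neg hU) hV, Kv_apply hφ hU hV]
  have hpU := hφ.vf U hU
  have hpV := hφ.vf V hV
  have hb : ∀ U V : Vec A, IsVectorField A U → IsVectorField A V →
      IsVectorField A ⁅U, V⁆ := fun _ _ hU hV => vf_bracket hU hV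
  rw [phi_neg hφ hU]
  have e1 : ⁅-U, V⁆ = -⁅U, V⁆ := by simp
  have e2 : ⁅-φ U, V⁆ = -⁅φ U, V⁆ := by simp
  have e3 : ⁅-U, φ V⁆ = -⁅U, φ V⁆ := by simp
  have e4 : ⁅-φ U, φ V⁆ = -⁅φ U, φ V⁆ := by simp
  rw [e1, e2, e3, e4, phi_neg hφ (hb _ _ hU hV), phi_neg hφ (hb _ _ hU hpV),
    phi_neg hφ (hb _ _ hpU hV)]
  abel

lemma Kv_vf {X Y : Vec A} (hX : IsVectorField A X) (hY : IsVectorField A Y) :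
    IsVectorField A ((curv A φ + cocurv A φ) [X, Y]) := by
  show IsVectorField A (curv A φ [X, Y] + cocurv A φ [X, Y])
  exact vf_add (hφ.vf _ (vf_bracket (vf_hpr hφ hX) (vf_hpr hφ hY)))
    (vf_hpr hφ (vf_bracket (hφ.vf _ hX) (hφ.vf _ hY)))

lemma Kv_vflist : ∀ ℓ, VFList A ℓ → IsVectorField A ((curv A φ + cocurv A φ) ℓ) := by
  intro ℓ hl
  match ℓ with
  | [] =>
    show IsVectorField A ((0 : Vec A) + 0)
    simpa using vf_zero (A := A)
  | [x] =>
    show IsVectorField A ((0 : Vec A) + 0)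
    simpa using vf_zero (A := A)
  | [x, y] =>
    rw [vfl_cons, vfl_cons] at hl
    exact Kv_vf hφ hl.1 hl.2.1
  | x :: y :: z :: t =>
    show IsVectorField A ((0 : Vec A) + 0)
    simpa using vf_zero (A := A)

lemma oneF_vflist : ∀ ℓ, VFList A ℓ → IsVectorField A (oneF A φ ℓ) := by
  intro ℓ hl
  match ℓ with
  | [] => exact vf_zero
  | [x] =>
    rw [vfl_cons] at hl
    exact hφ.vf _ hl.1
  | x :: y :: t => exact vf_zero

end Conn
end Work2
section Work3
variable {A : Type*} [CommRing A] [Algebra ℝ A]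

lemma sum_perm_one {M : Type*} [AddCommMonoid M] (g : Equiv.Perm (Fin 1) → M) :
    ∑ σ, g σ = g 1 := by
  rw [show (Finset.univ : Finset (Equiv.Perm (Fin 1))) = {1} by decide, Finset.sum_singleton]

lemma sum_perm_two {M : Type*} [AddCommMonoid M] (g : Equiv.Perm (Fin 2) → M) :
    ∑ σ, g σ = g 1 + g (Equiv.swap 0 1) := by
  rw [show (Finset.univ : Finset (Equiv.Perm (Fin 2))) = {1, Equiv.swap 0 1} by decide]
  rw [Finset.sum_insert (by decide), Finset.sum_singleton]

lemma sum_perm_three {M : Type*} [AddCommMonoid M] (g : Equiv.Perm (Fin 3) → M) :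
    ∑ σ, g σ = g 1 + g (Equiv.swap 0 1) + g (Equiv.swap 0 2) + g (Equiv.swap 1 2)
      + g (Equiv.swap 0 1 * Equiv.swap 1 2) + g (Equiv.swap 0 2 * Equiv.swap 1 2) := by
  rw [show (Finset.univ : Finset (Equiv.Perm (Fin 3))) =
      {1, Equiv.swap 0 1, Equiv.swap 0 2, Equiv.swap 1 2,
       Equiv.swap 0 1 * Equiv.swap 1 2, Equiv.swap 0 2 * Equiv.swap 1 2} by decide]
  rw [Finset.sum_insert (by decide), Finset.sum_insert (by decide),
    Finset.sum_insert (by decide), Finset.sum_insert (by decide),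
    Finset.sum_insert (by decide), Finset.sum_singleton]
  abel

lemma extd_apply (ω : SF A) (ℓ : List (Vec A)) :
    extd A ω ℓ = (∑ i : Fin ℓ.length,
        ((-1 : ℝ) ^ (i : ℕ)) • (ℓ.get i) (ω (ℓ.eraseIdx (i : ℕ))))
      + ∑ i : Fin ℓ.length,
          ∑ j ∈ Finset.univ.filter (fun j : Fin ℓ.length => (i : ℕ) < (j : ℕ)),
            ((-1 : ℝ) ^ ((i : ℕ) + (j : ℕ))) •
              ω ((⁅ℓ.get i, ℓ.get j⁆ : Vec A) :: ((ℓ.eraseIdx (j : ℕ)).eraseIdx (i : ℕ))) := by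
  simp [extd, LinearMap.pi_apply, LinearMap.add_apply, LinearMap.sum_apply,
    LinearMap.smul_apply, LinearMap.comp_apply, LinearMap.proj_apply]

lemma extd_nil (ω : SF A) : extd A ω [] = 0 := by
  simp [extd_apply]

lemma extd_one (ω : SF A) (X : Vec A) : extd A ω [X] = X (ω []) := by
  simp [extd_apply, Fin.sum_univ_one, List.eraseIdx]

lemma extd_two (ω : SF A) (X Y : Vec A) :
    extd A ω [X, Y] = X (ω [Y]) - Y (ω [X]) - ω [⁅X, Y⁆] := by
  rw [extd_apply]
  erw [Fin.sum_univ_two, Fin.sum_univ_two]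
  simp [Fin.sum_univ_two, Finset.sum_filter, List.eraseIdx, Fin.ext_iff]
  abel

lemma extd_three (ω : SF A) (X Y Z : Vec A) :
    extd A ω [X, Y, Z] = X (ω [Y, Z]) - Y (ω [X, Z]) + Z (ω [X, Y])
      - ω [⁅X, Y⁆, Z] + ω [⁅X, Z⁆, Y] - ω [⁅Y, Z⁆, X] := by
  rw [extd_apply]
  erw [Fin.sum_univ_three, Fin.sum_univ_three]
  simp [Fin.sum_univ_three, Finset.sum_filter, List.eraseIdx, Fin.ext_iff]
  norm_num
  abel

end Work3
section Work4
variable {A : Type*} [CommRing A] [Algebra ℝ A]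

lemma extd_support {p : ℕ} {ω : SF A} (hω : ∀ ℓ', ℓ'.length ≠ p → ω ℓ' = 0)
    {ℓ : List (Vec A)} (hl : ℓ.length ≠ p + 1) : extd A ω ℓ = 0 := by
  rw [extd_apply]
  have h1 : (∑ i : Fin ℓ.length,
      ((-1 : ℝ) ^ (i : ℕ)) • (ℓ.get i) (ω (ℓ.eraseIdx (i : ℕ)))) = 0 := by
    refine Finset.sum_eq_zero fun i _ => ?_
    have hi := i.isLt
    have e1 : (ℓ.eraseIdx (i : ℕ)).length = ℓ.length - 1 := by
      rw [List.length_eraseIdx, if_pos hi]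
    rw [hω _ (by omega), map_zero, smul_zero]
  have h2 : (∑ i : Fin ℓ.length,
      ∑ j ∈ Finset.univ.filter (fun j : Fin ℓ.length => (i : ℕ) < (j : ℕ)),
        ((-1 : ℝ) ^ ((i : ℕ) + (j : ℕ))) •
          ω ((⁅ℓ.get i, ℓ.get j⁆ : Vec A) :: ((ℓ.eraseIdx (j : ℕ)).eraseIdx (i : ℕ)))) = 0 := by
    refine Finset.sum_eq_zero fun i _ => Finset.sum_eq_zero fun j hj => ?_
    rw [Finset.mem_filter] at hj
    have hij := hj.2
    have hjl := j.isLt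
    have e1 : (ℓ.eraseIdx (j : ℕ)).length = ℓ.length - 1 := by
      rw [List.length_eraseIdx, if_pos hjl]
    have e2 : ((ℓ.eraseIdx (j : ℕ)).eraseIdx (i : ℕ)).length = ℓ.length - 2 := by
      rw [List.length_eraseIdx, e1, if_pos (by omega)]
      omega
    rw [hω _ (by simp [e2]; omega), smul_zero]
  rw [h1, h2, add_zero]

lemma insS_apply_of_le {k : ℕ} (K : VF A) (ω : SF A) {ℓ : List (Vec A)}
    (hk : k ≤ ℓ.length) :
    insS A k K ω ℓ = (((k.factorial * (ℓ.length - k).factorial : ℕ) : ℝ))⁻¹ •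
        ∑ σ : Equiv.Perm (Fin ℓ.length),
          (((Equiv.Perm.sign σ : ℤ) : ℝ)) •
            ω ((K (List.ofFn fun m : Fin k => ℓ.get (σ (Fin.castLE hk m)))) ::
                List.ofFn fun m : Fin (ℓ.length - k) =>
                  ℓ.get (σ ⟨k + (m : ℕ), by have := m.isLt; omega⟩)) := by
  simp only [insS, LinearMap.pi_apply]
  rw [dif_pos hk]
  simp [LinearMap.smul_apply, LinearMap.sum_apply, LinearMap.proj_apply]

lemma insS_apply_of_lt {k : ℕ} (K : VF A) (ω : SF A) {ℓ : List (Vec A)}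
    (hk : ℓ.length < k) : insS A k K ω ℓ = 0 := by
  simp only [insS, LinearMap.pi_apply]
  rw [dif_neg (by omega)]
  simp

lemma insS_support {k p : ℕ} {K : VF A} {ω : SF A}
    (hω : ∀ ℓ', ℓ'.length ≠ p → ω ℓ' = 0) {ℓ : List (Vec A)}
    (hl : ℓ.length + 1 ≠ p + k) : insS A k K ω ℓ = 0 := by
  rcases le_or_gt k ℓ.length with hk | hk
  · rw [insS_apply_of_le K ω hk]
    rw [Finset.sum_eq_zero, smul_zero]
    intro σ _
    rw [hω, smul_zero]
    simp only [List.length_cons, List.length_ofFn]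
    omega
  · exact insS_apply_of_lt K ω hk
end Work4
section Work5
variable {A : Type*} [CommRing A] [Algebra ℝ A]

lemma insS_one_one (K : VF A) (ω : SF A) (X : Vec A) :
    insS A 1 K ω [X] = ω [K [X]] := by
  rw [insS_apply_of_le K ω (by simp)]
  simp only [List.length_cons, List.length_nil, Nat.reduceAdd]
  rw [sum_perm_one]
  simp [List.ofFn_succ, Nat.factorial]

lemma insS_one_two (K : VF A) (ω : SF A) (X Y : Vec A) :
    insS A 1 K ω [X, Y] = ω [K [X], Y] - ω [K [Y], X] := by
  rw [insS_apply_of_le K ω (by simp)]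
  simp only [List.length_cons, List.length_nil, Nat.reduceAdd]
  rw [sum_perm_two]
  simp [List.ofFn_succ, Nat.factorial, Equiv.swap_apply_left, Equiv.swap_apply_right]
  abel

lemma insS_two_two (K : VF A) (ω : SF A) (X Y : Vec A) :
    insS A 2 K ω [X, Y] = (2 : ℝ)⁻¹ • (ω [K [X, Y]] - ω [K [Y, X]]) := by
  rw [insS_apply_of_le K ω (by simp)]
  simp only [List.length_cons, List.length_nil, Nat.reduceAdd]
  rw [sum_perm_two]
  simp [List.ofFn_succ, Nat.factorial, Equiv.swap_apply_left, Equiv.swap_apply_right,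
    smul_sub, sub_eq_add_neg]

end Work5
section Work6
variable {A : Type*} [CommRing A] [Algebra ℝ A]

lemma insS_one_three (K : VF A) (ω : SF A) (X Y Z : Vec A) :
    insS A 1 K ω [X, Y, Z] = (2 : ℝ)⁻¹ •
      (ω [K [X], Y, Z] - ω [K [Y], X, Z] - ω [K [Z], Y, X]
        - ω [K [X], Z, Y] + ω [K [Y], Z, X] + ω [K [Z], X, Y]) := by
  rw [insS_apply_of_le K ω (by simp)]
  simp only [List.length_cons, List.length_nil, Nat.reduceAdd]
  rw [sum_perm_three]
  simp [List.ofFn_succ, Nat.factorial,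
    (show ∀ x : Fin 3, (1 : Equiv.Perm (Fin 3)) x = x from fun x => rfl),
    Equiv.Perm.mul_apply,
    (show (Equiv.swap (0:Fin 3) 1) 0 = 1 by decide),
    (show (Equiv.swap (0:Fin 3) 1) 1 = 0 by decide),
    (show (Equiv.swap (0:Fin 3) 1) 2 = 2 by decide),
    (show (Equiv.swap (0:Fin 3) 2) 0 = 2 by decide),
    (show (Equiv.swap (0:Fin 3) 2) 1 = 1 by decide),
    (show (Equiv.swap (0:Fin 3) 2) 2 = 0 by decide),
    (show (Equiv.swap (1:Fin 3) 2) 0 = 0 by decide),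
    (show (Equiv.swap (1:Fin 3) 2) 1 = 2 by decide),
    (show (Equiv.swap (1:Fin 3) 2) 2 = 1 by decide),
    (show Equiv.Perm.sign (1 : Equiv.Perm (Fin 3)) = 1 by decide),
    (show Equiv.Perm.sign (Equiv.swap (0:Fin 3) 1) = -1 by decide),
    (show Equiv.Perm.sign (Equiv.swap (0:Fin 3) 2) = -1 by decide),
    (show Equiv.Perm.sign (Equiv.swap (1:Fin 3) 2) = -1 by decide),
    smul_add, smul_sub, sub_eq_add_neg]

lemma insS_two_three (K : VF A) (ω : SF A) (X Y Z : Vec A) :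
    insS A 2 K ω [X, Y, Z] = (2 : ℝ)⁻¹ •
      (ω [K [X, Y], Z] - ω [K [Y, X], Z] - ω [K [Z, Y], X]
        - ω [K [X, Z], Y] + ω [K [Y, Z], X] + ω [K [Z, X], Y]) := by
  rw [insS_apply_of_le K ω (by simp)]
  simp only [List.length_cons, List.length_nil, Nat.reduceAdd]
  rw [sum_perm_three]
  simp [List.ofFn_succ, Nat.factorial,
    (show ∀ x : Fin 3, (1 : Equiv.Perm (Fin 3)) x = x from fun x => rfl),
    Equiv.Perm.mul_apply,
    (show (Equiv.swap (0:Fin 3) 1) 0 = 1 by decide),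
    (show (Equiv.swap (0:Fin 3) 1) 1 = 0 by decide),
    (show (Equiv.swap (0:Fin 3) 1) 2 = 2 by decide),
    (show (Equiv.swap (0:Fin 3) 2) 0 = 2 by decide),
    (show (Equiv.swap (0:Fin 3) 2) 1 = 1 by decide),
    (show (Equiv.swap (0:Fin 3) 2) 2 = 0 by decide),
    (show (Equiv.swap (1:Fin 3) 2) 0 = 0 by decide),
    (show (Equiv.swap (1:Fin 3) 2) 1 = 2 by decide),
    (show (Equiv.swap (1:Fin 3) 2) 2 = 1 by decide),
    (show Equiv.Perm.sign (1 : Equiv.Perm (Fin 3)) = 1 by decide),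
    (show Equiv.Perm.sign (Equiv.swap (0:Fin 3) 1) = -1 by decide),
    (show Equiv.Perm.sign (Equiv.swap (0:Fin 3) 2) = -1 by decide),
    (show Equiv.Perm.sign (Equiv.swap (1:Fin 3) 2) = -1 by decide),
    smul_add, smul_sub, sub_eq_add_neg]

end Work6
section Work7
variable {A : Type*} [CommRing A] [Algebra ℝ A]

/-- Agreement of raw scalar forms on lists of genuine vector fields. -/
def AgreeVF (ω ψ : SF A) : Prop := ∀ ℓ, VFList A ℓ → ω ℓ = ψ ℓ

lemma vfl_ofFn {n : ℕ} {g : Fin n → Vec A} (hg : ∀ i, IsVectorField A (g i)) :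
    VFList A (List.ofFn g) := by
  intro x hx
  rw [List.mem_ofFn] at hx
  obtain ⟨i, rfl⟩ := hx
  exact hg i

lemma vfl_eraseIdx {ℓ : List (Vec A)} (hl : VFList A ℓ) (i : ℕ) :
    VFList A (ℓ.eraseIdx i) :=
  vfl_sublist (List.eraseIdx_sublist ℓ i) hl

lemma extd_congr {ω ψ : SF A} (h : AgreeVF ω ψ) : AgreeVF (extd A ω) (extd A ψ) := by
  intro ℓ hl
  rw [extd_apply, extd_apply]
  congr 1
  · refine Finset.sum_congr rfl fun i _ => ?_
    rw [h _ (vfl_eraseIdx hl _)]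
  · refine Finset.sum_congr rfl fun i _ => Finset.sum_congr rfl fun j _ => ?_
    rw [h _ (vfl_cons.mpr ⟨vf_bracket (hl _ (ℓ.get_mem _)) (hl _ (ℓ.get_mem _)),
      vfl_eraseIdx (vfl_eraseIdx hl _) _⟩)]

lemma insS_congr {k : ℕ} {K : VF A} (hK : ∀ ℓ, VFList A ℓ → IsVectorField A (K ℓ))
    {ω ψ : SF A} (h : AgreeVF ω ψ) : AgreeVF (insS A k K ω) (insS A k K ψ) := by
  intro ℓ hl
  rcases le_or_gt k ℓ.length with hk | hk
  · rw [insS_apply_of_le K ω hk, insS_apply_of_le K ψ hk]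
    congr 1
    refine Finset.sum_congr rfl fun σ _ => ?_
    rw [h _ (vfl_cons.mpr ⟨hK _ (vfl_ofFn fun m => hl _ (ℓ.get_mem _)),
      vfl_ofFn fun m => hl _ (ℓ.get_mem _)⟩)]
  · rw [insS_apply_of_lt K ω hk, insS_apply_of_lt K ψ hk]

lemma theta_apply (k : ℕ) (K : VF A) (ω : SF A) (ℓ : List (Vec A)) :
    theta A k K ω ℓ = insS A k K (extd A ω) ℓ
      - ((-1 : ℝ) ^ (k + 1)) • extd A (insS A k K ω) ℓ := by
  simp [theta, LinearMap.sub_apply, LinearMap.comp_apply, LinearMap.smul_apply,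
    Pi.sub_apply, Pi.smul_apply]

lemma theta_congr {k : ℕ} {K : VF A} (hK : ∀ ℓ, VFList A ℓ → IsVectorField A (K ℓ))
    {ω ψ : SF A} (h : AgreeVF ω ψ) : AgreeVF (theta A k K ω) (theta A k K ψ) := by
  intro ℓ hl
  rw [theta_apply, theta_apply, insS_congr hK (extd_congr h) ℓ hl,
    extd_congr (insS_congr hK h) ℓ hl]

lemma constF_nil (f : A) : constF A f [] = f := rfl

lemma constF_support (f : A) : ∀ ℓ' : List (Vec A), ℓ'.length ≠ 0 → constF A f ℓ' = 0 := by
  intro ℓ' h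
  match ℓ' with
  | [] => simp at h
  | x :: t => rfl

lemma fnb_apply (k l : ℕ) (K L : VF A) (ℓ : List (Vec A)) (f : A) :
    fnb A k l K L ℓ f = theta A k K (theta A l L (constF A f)) ℓ
      - ((-1 : ℝ) ^ (k * l)) • theta A l L (theta A k K (constF A f)) ℓ := by
  simp [fnb, LinearMap.sub_apply, LinearMap.comp_apply, LinearMap.smul_apply,
    LinearMap.proj_apply, Pi.sub_apply, Pi.smul_apply]

end Work7
section Work8
variable {A : Type*} [CommRing A] [Algebra ℝ A]

/-- `ω₁ = θ(φ)f` : the 1-form `X ↦ (φX)f`. -/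
def w1F (φ : Vec A → Vec A) (f : A) : SF A := fun ℓ => match ℓ with
  | [X] => φ X f
  | _ => 0

/-- `ω₂` : the 2-form `(X,Y) ↦ ((R+R̄)(X,Y))f`. -/
def w2F (φ : Vec A → Vec A) (f : A) : SF A := fun ℓ => match ℓ with
  | [X, Y] => (curv A φ + cocurv A φ) [X, Y] f
  | _ => 0

/-- `μ = i(R+R̄)ω₁` : the 2-form `(X,Y) ↦ (φ((R+R̄)(X,Y)))f`. -/
def wmuF (φ : Vec A → Vec A) (f : A) : SF A := fun ℓ => match ℓ with
  | [X, Y] => φ ((curv A φ + cocurv A φ) [X, Y]) f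
  | _ => 0

/-- `ν = i(φ)ω₂`. -/
def wnuF (φ : Vec A → Vec A) (f : A) : SF A := fun ℓ => match ℓ with
  | [X, Y] => (curv A φ + cocurv A φ) [φ X, Y] f - (curv A φ + cocurv A φ) [φ Y, X] f
  | _ => 0

lemma w1F_support (φ : Vec A → Vec A) (f : A) :
    ∀ ℓ' : List (Vec A), ℓ'.length ≠ 1 → w1F φ f ℓ' = 0 := by
  intro ℓ' h
  match ℓ' with
  | [] => rfl
  | [X] => simp at h
  | X :: Y :: t => rfl

lemma w2F_support (φ : Vec A → Vec A) (f : A) :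
    ∀ ℓ' : List (Vec A), ℓ'.length ≠ 2 → w2F φ f ℓ' = 0 := by
  intro ℓ' h
  match ℓ' with
  | [] => rfl
  | [X] => rfl
  | [X, Y] => simp at h
  | X :: Y :: Z :: t => rfl

lemma wmuF_support (φ : Vec A → Vec A) (f : A) :
    ∀ ℓ' : List (Vec A), ℓ'.length ≠ 2 → wmuF φ f ℓ' = 0 := by
  intro ℓ' h
  match ℓ' with
  | [] => rfl
  | [X] => rfl
  | [X, Y] => simp at h
  | X :: Y :: Z :: t => rfl

lemma wnuF_support (φ : Vec A → Vec A) (f : A) :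
    ∀ ℓ' : List (Vec A), ℓ'.length ≠ 2 → wnuF φ f ℓ' = 0 := by
  intro ℓ' h
  match ℓ' with
  | [] => rfl
  | [X] => rfl
  | [X, Y] => simp at h
  | X :: Y :: Z :: t => rfl

lemma half_smul (x : A) : (2 : ℝ)⁻¹ • (x + x) = x := by
  rw [← two_smul ℝ x, smul_smul]
  norm_num

lemma insS_pt_support {k p : ℕ} {K : VF A} {ω : SF A} (hk : 1 ≤ k)
    (hω : ∀ ℓ', ℓ'.length ≠ p → ω ℓ' = 0) :
    ∀ ℓ' : List (Vec A), ℓ'.length ≠ p + k - 1 → insS A k K ω ℓ' = 0 := by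
  intro ℓ' h
  exact insS_support hω (by omega)

lemma theta_support {k p : ℕ} {K : VF A} {ω : SF A} (hk : 1 ≤ k)
    (hω : ∀ ℓ', ℓ'.length ≠ p → ω ℓ' = 0) {ℓ : List (Vec A)}
    (hl : ℓ.length ≠ p + k) : theta A k K ω ℓ = 0 := by
  rw [theta_apply]
  rw [insS_support (fun ℓ' h' => extd_support hω h') (by omega),
    extd_support (insS_pt_support hk hω) (by omega), smul_zero, sub_zero]

section Conn
variable {φ : Vec A → Vec A} (hφ : IsConnection A φ) (f : A)
include hφ

lemma L1 : AgreeVF (theta A 1 (oneF A φ) (constF A f)) (w1F φ f) := by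
  intro ℓ hl
  match ℓ with
  | [X] =>
    rw [theta_apply]
    have hz : insS A 1 (oneF A φ) (constF A f) = (0 : SF A) := by
      funext ℓ'
      match ℓ' with
      | [] => exact insS_apply_of_lt _ _ (by simp)
      | x :: t => exact insS_support (constF_support f) (by simp)
    rw [hz, map_zero, Pi.zero_apply, smul_zero, sub_zero, insS_one_one, extd_one]
    rfl
  | [] => exact theta_support le_rfl (constF_support f) (by simp)
  | X :: Y :: t => exact theta_support le_rfl (constF_support f) (by simp)

lemma L3 : AgreeVF (theta A 2 (curv A φ + cocurv A φ) (constF A f)) (w2F φ f) := by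
  intro ℓ hl
  match ℓ with
  | [U, V] =>
    rw [theta_apply]
    have hz : insS A 2 (curv A φ + cocurv A φ) (constF A f) = (0 : SF A) := by
      funext ℓ'
      match ℓ' with
      | [] => exact insS_apply_of_lt _ _ (by simp)
      | [x] => exact insS_apply_of_lt _ _ (by simp)
      | x :: y :: t => exact insS_support (constF_support f) (by simp)
    rw [hz, map_zero, Pi.zero_apply, smul_zero, sub_zero, insS_two_two, extd_one, extd_one]
    rw [vfl_cons, vfl_cons] at hl
    rw [Kv_antisym hφ hl.1 hl.2.1, LinearMap.neg_apply, sub_neg_eq_add, half_smul]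
    rfl
  | [] => exact theta_support one_le_two (constF_support f) (by simp)
  | [x] => exact theta_support one_le_two (constF_support f) (by simp)
  | x :: y :: z :: t => exact theta_support one_le_two (constF_support f) (by simp)

lemma L4a : AgreeVF (insS A 2 (curv A φ + cocurv A φ) (w1F φ f)) (wmuF φ f) := by
  intro ℓ hl
  match ℓ with
  | [U, V] =>
    rw [insS_two_two]
    rw [vfl_cons, vfl_cons] at hl
    have h1 : w1F φ f [(curv A φ + cocurv A φ) [V, U]]
        = -(w1F φ f [(curv A φ + cocurv A φ) [U, V]]) := by
      show φ ((curv A φ + cocurv A φ) [V, U]) f = -(φ ((curv A φ + cocurv A φ) [U, V]) f)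
      rw [Kv_antisym hφ hl.1 hl.2.1, phi_neg hφ (Kv_vf hφ hl.1 hl.2.1), LinearMap.neg_apply]
    rw [h1, sub_neg_eq_add, half_smul]
    rfl
  | [] => exact insS_apply_of_lt _ _ (by simp)
  | [x] => exact insS_apply_of_lt _ _ (by simp)
  | x :: y :: z :: t => exact insS_support (w1F_support φ f) (by simp)

lemma L4b : AgreeVF (insS A 1 (oneF A φ) (w2F φ f)) (wnuF φ f) := by
  intro ℓ hl
  match ℓ with
  | [U, V] => rw [insS_one_two]; rfl
  | [] => exact insS_apply_of_lt _ _ (by simp)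
  | [x] => exact insS_support (w2F_support φ f) (by simp)
  | x :: y :: z :: t => exact insS_support (w2F_support φ f) (by simp)

end Conn
end Work8
section Work9
variable {A : Type*} [CommRing A] [Algebra ℝ A]
variable {φ : Vec A → Vec A} (hφ : IsConnection A φ) (f : A)
include hφ

lemma extd_w1_neg_left {W U : Vec A} (hW : IsVectorField A W) (hU : IsVectorField A U) :
    extd A (w1F φ f) [-W, U] = -(extd A (w1F φ f) [W, U]) := by
  rw [extd_two, extd_two]
  have e1 : w1F φ f [-W] = -(w1F φ f [W]) := by
    show φ (-W) f = -(φ W f)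
    rw [phi_neg hφ hW, LinearMap.neg_apply]
  have e2 : w1F φ f [⁅-W, U⁆] = -(w1F φ f [⁅W, U⁆]) := by
    show φ ⁅-W, U⁆ f = -(φ ⁅W, U⁆ f)
    rw [neg_lie, phi_neg hφ (vf_bracket hW hU), LinearMap.neg_apply]
  rw [e1, e2, LinearMap.neg_apply, map_neg]
  abel

lemma w2F_antisym {U V : Vec A} (hU : IsVectorField A U) (hV : IsVectorField A V) :
    w2F φ f [V, U] = -(w2F φ f [U, V]) := by
  show (curv A φ + cocurv A φ) [V, U] f = -((curv A φ + cocurv A φ) [U, V] f)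
  rw [Kv_antisym hφ hU hV, LinearMap.neg_apply]

lemma w2F_neg_left {U V : Vec A} (hU : IsVectorField A U) (hV : IsVectorField A V) :
    w2F φ f [-U, V] = -(w2F φ f [U, V]) := by
  show (curv A φ + cocurv A φ) [-U, V] f = -((curv A φ + cocurv A φ) [U, V] f)
  rw [Kv_neg_left hφ hU hV, LinearMap.neg_apply]

lemma extd_w2_swap {W U V : Vec A} (hW : IsVectorField A W) (hU : IsVectorField A U)
    (hV : IsVectorField A V) :
    extd A (w2F φ f) [W, V, U] = -(extd A (w2F φ f) [W, U, V]) := by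
  rw [extd_three, extd_three]
  have e1 : w2F φ f [V, U] = -(w2F φ f [U, V]) := w2F_antisym hφ f hU hV
  have e2 : w2F φ f [⁅W, V⁆, U] = -(-(w2F φ f [⁅W, V⁆, U])) := by rw [neg_neg]
  have e3 : w2F φ f [⁅V, U⁆, W] = -(w2F φ f [⁅U, V⁆, W]) := by
    have : ⁅V, U⁆ = -⁅U, V⁆ := by rw [← lie_skew]
    rw [this, w2F_neg_left hφ f (vf_bracket hU hV) hW]
  rw [e1, e3, map_neg]
  abel

end Work9
section Work10
variable {A : Type*} [CommRing A] [Algebra ℝ A]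
lemma half_smul3 (a b c : A) :
    (2 : ℝ)⁻¹ • ((a + a) + ((b + b) + (c + c))) = a + b + c := by
  rw [← two_smul ℝ a, ← two_smul ℝ b, ← two_smul ℝ c, ← smul_add, ← smul_add, smul_smul]
  norm_num
  exact (add_assoc a b c).symm

section Conn
variable {φ : Vec A → Vec A} (hφ : IsConnection A φ) (f : A)
include hφ

set_option maxHeartbeats 10000000 in
lemma L5 : AgreeVF (theta A 2 (curv A φ + cocurv A φ) (w1F φ f))
    (theta A 1 (oneF A φ) (w2F φ f)) := by
  intro ℓ hl
  match ℓ with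
  | [] => rw [theta_support one_le_two (w1F_support φ f) (by simp),
      theta_support le_rfl (w2F_support φ f) (by simp)]
  | [x] => rw [theta_support one_le_two (w1F_support φ f) (by simp),
      theta_support le_rfl (w2F_support φ f) (by simp)]
  | [x, y] => rw [theta_support one_le_two (w1F_support φ f) (by simp),
      theta_support le_rfl (w2F_support φ f) (by simp)]
  | x :: y :: z :: w :: t => rw [theta_support one_le_two (w1F_support φ f) (by simp),
      theta_support le_rfl (w2F_support φ f) (by simp)]
  | [X, Y, Z] =>
    have hX : IsVectorField A X := hl X (by simp)
    have hY : IsVectorField A Y := hl Y (by simp)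
    have hZ : IsVectorField A Z := hl Z (by simp)
    rw [theta_apply, theta_apply]
    rw [show ((-1 : ℝ)) ^ (2 + 1) = -1 by norm_num, show ((-1 : ℝ)) ^ (1 + 1) = 1 by norm_num,
      neg_smul, one_smul, sub_neg_eq_add]
    rw [extd_congr (L4a hφ f) _ hl, extd_congr (L4b hφ f) _ hl]
    rw [insS_two_three, insS_one_three]
    -- collapse the LHS permutation sum
    rw [show (curv A φ + cocurv A φ) [Y, X] = -((curv A φ + cocurv A φ) [X, Y]) from
        Kv_antisym hφ hX hY,
      show (curv A φ + cocurv A φ) [Z, Y] = -((curv A φ + cocurv A φ) [Y, Z]) from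
        Kv_antisym hφ hY hZ,
      show (curv A φ + cocurv A φ) [X, Z] = -((curv A φ + cocurv A φ) [Z, X]) from
        Kv_antisym hφ hZ hX,
      extd_w1_neg_left hφ f (Kv_vf hφ hX hY) hZ,
      extd_w1_neg_left hφ f (Kv_vf hφ hY hZ) hX,
      extd_w1_neg_left hφ f (Kv_vf hφ hZ hX) hY]
    rw [show ∀ a b c : A, a - -a - -b - -c + b + c = (a + a) + ((b + b) + (c + c)) from
        fun a b c => by abel, half_smul3]
    -- collapse the RHS permutation sum
    rw [show oneF A φ [X] = φ X from rfl, show oneF A φ [Y] = φ Y from rfl,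
      show oneF A φ [Z] = φ Z from rfl]
    rw [extd_w2_swap hφ f (hφ.vf X hX) hY hZ,
      show extd A (w2F φ f) [φ Y, X, Z] = -(extd A (w2F φ f) [φ Y, Z, X]) from
        extd_w2_swap hφ f (hφ.vf Y hY) hZ hX,
      show extd A (w2F φ f) [φ Z, Y, X] = -(extd A (w2F φ f) [φ Z, X, Y]) from
        extd_w2_swap hφ f (hφ.vf Z hZ) hX hY]
    rw [show ∀ a b c : A, a - -b - -c - -a + b + c = (a + a) + ((b + b) + (c + c)) from
        fun a b c => by abel, half_smul3]
    rw [one_smul]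
    rw [extd_two, extd_two, extd_two, extd_three, extd_three, extd_three, extd_three,
      extd_three]
    have hpX : IsVectorField A (φ X) := hφ.vf _ hX
    have hpY : IsVectorField A (φ Y) := hφ.vf _ hY
    have hpZ : IsVectorField A (φ Z) := hφ.vf _ hZ
    have hbr : ∀ U V : Vec A, IsVectorField A U → IsVectorField A V →
        IsVectorField A ⁅U, V⁆ := fun _ _ hU hV => vf_bracket hU hV
    have hXY := hbr X Y hX hY; have hXZ := hbr X Z hX hZ; have hYZ := hbr Y Z hY hZ
    have hYX := hbr Y X hY hX; have hZX := hbr Z X hZ hX; have hZY := hbr Z Y hZ hY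
    have hpXY := hφ.vf _ hXY; have hpXZ := hφ.vf _ hXZ; have hpYZ := hφ.vf _ hYZ
    have hpYX := hφ.vf _ hYX; have hpZX := hφ.vf _ hZX; have hpZY := hφ.vf _ hZY
    have b1 := hbr (φ X) Y hpX hY; have b2 := hbr X (φ Y) hX hpY
    have b3 := hbr (φ X) Z hpX hZ; have b4 := hbr X (φ Z) hX hpZ
    have b5 := hbr (φ Y) Z hpY hZ; have b6 := hbr Y (φ Z) hY hpZ
    have b7 := hbr (φ Y) X hpY hX; have b8 := hbr Y (φ X) hY hpX
    have b9 := hbr (φ Z) X hpZ hX; have b10 := hbr Z (φ X) hZ hpX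
    have b11 := hbr (φ Z) Y hpZ hY; have b12 := hbr Z (φ Y) hZ hpY
    have b13 := hbr (φ X) (φ Y) hpX hpY; have b14 := hbr (φ X) (φ Z) hpX hpZ
    have b15 := hbr (φ Y) (φ Z) hpY hpZ; have b16 := hbr (φ Y) (φ X) hpY hpX
    have b17 := hbr (φ Z) (φ X) hpZ hpX; have b18 := hbr (φ Z) (φ Y) hpZ hpY
    have c1 := hφ.vf _ b1; have c2 := hφ.vf _ b2; have c3 := hφ.vf _ b3
    have c4 := hφ.vf _ b4; have c5 := hφ.vf _ b5; have c6 := hφ.vf _ b6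
    have c7 := hφ.vf _ b7; have c8 := hφ.vf _ b8; have c9 := hφ.vf _ b9
    have c10 := hφ.vf _ b10; have c11 := hφ.vf _ b11; have c12 := hφ.vf _ b12
    have c13 := hφ.vf _ b13; have c14 := hφ.vf _ b14; have c15 := hφ.vf _ b15
    have c16 := hφ.vf _ b16; have c17 := hφ.vf _ b17; have c18 := hφ.vf _ b18
    simp (config := { maxDischargeDepth := 10 }) only [w1F, w2F, wmuF, wnuF, Kv_apply hφ, sub_lie, add_lie, neg_lie, lie_sub,
      lie_add, lie_neg, lie_lie, hφ.map_add, phi_sub hφ, phi_neg hφ, hφ.idem,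
      LinearMap.add_apply, LinearMap.sub_apply, LinearMap.neg_apply, lie_app, map_add,
      map_sub, map_neg, hX, hY, hZ, hpX, hpY, hpZ, hXY, hXZ, hYZ, hYX, hZX, hZY,
      hpXY, hpXZ, hpYZ, hpYX, hpZX, hpZY, b1, b2, b3, b4, b5, b6, b7, b8, b9, b10, b11,
      b12, b13, b14, b15, b16, b17, b18, c1, c2, c3, c4, c5, c6, c7, c8, c9, c10, c11,
      c12, c13, c14, c15, c16, c17, c18, vf_bracket, vf_add, vf_sub, vf_neg, hφ.vf]
    have jq1 : φ ⁅Z, X⁆ = -φ ⁅X, Z⁆ := by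
      rw [show (⁅Z, X⁆ : Vec A) = -⁅X, Z⁆ from by
        simp only [Ring.lie_def, mul_sub, sub_mul, mul_assoc]; abel]
      simp (config := { maxDischargeDepth := 10 }) only [hφ.map_add, phi_sub hφ, phi_neg hφ, hφ.idem, lie_neg, neg_lie, lie_add, add_lie,
      lie_sub, sub_lie, hX, hY, hZ, hpX, hpY, hpZ, hXY, hXZ, hYZ, hYX, hZX, hZY, hpXY,
      hpXZ, hpYZ, hpYX, hpZX, hpZY, b1, b2, b3, b4, b5, b6, b7, b8, b9, b10, b11, b12,
      b13, b14, b15, b16, b17, b18, c1, c2, c3, c4, c5, c6, c7, c8, c9, c10, c11, c12,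
      c13, c14, c15, c16, c17, c18, vf_bracket, vf_add, vf_sub, vf_neg, hφ.vf]
      try abel
    have jq2 : φ ⁅X, ⁅Y, Z⁆⁆ = φ ⁅Y, ⁅X, Z⁆⁆ - φ ⁅Z, ⁅X, Y⁆⁆ := by
      rw [show (⁅X, ⁅Y, Z⁆⁆ : Vec A) = ⁅Y, ⁅X, Z⁆⁆ - ⁅Z, ⁅X, Y⁆⁆ from by
        simp only [Ring.lie_def, mul_sub, sub_mul, mul_assoc]; abel]
      simp (config := { maxDischargeDepth := 10 }) only [jq1, hφ.map_add, phi_sub hφ, phi_neg hφ, hφ.idem, lie_neg, neg_lie, lie_add, add_lie,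
      lie_sub, sub_lie, hX, hY, hZ, hpX, hpY, hpZ, hXY, hXZ, hYZ, hYX, hZX, hZY, hpXY,
      hpXZ, hpYZ, hpYX, hpZX, hpZY, b1, b2, b3, b4, b5, b6, b7, b8, b9, b10, b11, b12,
      b13, b14, b15, b16, b17, b18, c1, c2, c3, c4, c5, c6, c7, c8, c9, c10, c11, c12,
      c13, c14, c15, c16, c17, c18, vf_bracket, vf_add, vf_sub, vf_neg, hφ.vf]
      try abel
    have jq3 : φ ⁅X, ⁅Z, Y⁆⁆ = -φ ⁅Y, ⁅X, Z⁆⁆ + φ ⁅Z, ⁅X, Y⁆⁆ := by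
      rw [show (⁅X, ⁅Z, Y⁆⁆ : Vec A) = -⁅Y, ⁅X, Z⁆⁆ + ⁅Z, ⁅X, Y⁆⁆ from by
        simp only [Ring.lie_def, mul_sub, sub_mul, mul_assoc]; abel]
      simp (config := { maxDischargeDepth := 10 }) only [jq1, hφ.map_add, phi_sub hφ, phi_neg hφ, hφ.idem, lie_neg, neg_lie, lie_add, add_lie,
      lie_sub, sub_lie, hX, hY, hZ, hpX, hpY, hpZ, hXY, hXZ, hYZ, hYX, hZX, hZY, hpXY,
      hpXZ, hpYZ, hpYX, hpZX, hpZY, b1, b2, b3, b4, b5, b6, b7, b8, b9, b10, b11, b12,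
      b13, b14, b15, b16, b17, b18, c1, c2, c3, c4, c5, c6, c7, c8, c9, c10, c11, c12,
      c13, c14, c15, c16, c17, c18, vf_bracket, vf_add, vf_sub, vf_neg, hφ.vf]
      try abel
    have jq4 : φ ⁅Y, ⁅Z, X⁆⁆ = -φ ⁅Y, ⁅X, Z⁆⁆ := by
      rw [show (⁅Y, ⁅Z, X⁆⁆ : Vec A) = -⁅Y, ⁅X, Z⁆⁆ from by
        simp only [Ring.lie_def, mul_sub, sub_mul, mul_assoc]; abel]
      simp (config := { maxDischargeDepth := 10 }) only [jq1, hφ.map_add, phi_sub hφ, phi_neg hφ, hφ.idem, lie_neg, neg_lie, lie_add, add_lie,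
      lie_sub, sub_lie, hX, hY, hZ, hpX, hpY, hpZ, hXY, hXZ, hYZ, hYX, hZX, hZY, hpXY,
      hpXZ, hpYZ, hpYX, hpZX, hpZY, b1, b2, b3, b4, b5, b6, b7, b8, b9, b10, b11, b12,
      b13, b14, b15, b16, b17, b18, c1, c2, c3, c4, c5, c6, c7, c8, c9, c10, c11, c12,
      c13, c14, c15, c16, c17, c18, vf_bracket, vf_add, vf_sub, vf_neg, hφ.vf]
      try abel
    have jq5 : φ ⁅Z, ⁅Y, X⁆⁆ = -φ ⁅Z, ⁅X, Y⁆⁆ := by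
      rw [show (⁅Z, ⁅Y, X⁆⁆ : Vec A) = -⁅Z, ⁅X, Y⁆⁆ from by
        simp only [Ring.lie_def, mul_sub, sub_mul, mul_assoc]; abel]
      simp (config := { maxDischargeDepth := 10 }) only [jq1, hφ.map_add, phi_sub hφ, phi_neg hφ, hφ.idem, lie_neg, neg_lie, lie_add, add_lie,
      lie_sub, sub_lie, hX, hY, hZ, hpX, hpY, hpZ, hXY, hXZ, hYZ, hYX, hZX, hZY, hpXY,
      hpXZ, hpYZ, hpYX, hpZX, hpZY, b1, b2, b3, b4, b5, b6, b7, b8, b9, b10, b11, b12,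
      b13, b14, b15, b16, b17, b18, c1, c2, c3, c4, c5, c6, c7, c8, c9, c10, c11, c12,
      c13, c14, c15, c16, c17, c18, vf_bracket, vf_add, vf_sub, vf_neg, hφ.vf]
      try abel
    have jq6 : φ ⁅φ X, Y⁆ = -φ ⁅Y, φ X⁆ := by
      rw [show (⁅φ X, Y⁆ : Vec A) = -⁅Y, φ X⁆ from by
        simp only [Ring.lie_def, mul_sub, sub_mul, mul_assoc]; abel]
      simp (config := { maxDischargeDepth := 10 }) only [jq1, hφ.map_add, phi_sub hφ, phi_neg hφ, hφ.idem, lie_neg, neg_lie, lie_add, add_lie,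
      lie_sub, sub_lie, hX, hY, hZ, hpX, hpY, hpZ, hXY, hXZ, hYZ, hYX, hZX, hZY, hpXY,
      hpXZ, hpYZ, hpYX, hpZX, hpZY, b1, b2, b3, b4, b5, b6, b7, b8, b9, b10, b11, b12,
      b13, b14, b15, b16, b17, b18, c1, c2, c3, c4, c5, c6, c7, c8, c9, c10, c11, c12,
      c13, c14, c15, c16, c17, c18, vf_bracket, vf_add, vf_sub, vf_neg, hφ.vf]
      try abel
    have jq7 : φ ⁅φ X, Z⁆ = -φ ⁅Z, φ X⁆ := by
      rw [show (⁅φ X, Z⁆ : Vec A) = -⁅Z, φ X⁆ from by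
        simp only [Ring.lie_def, mul_sub, sub_mul, mul_assoc]; abel]
      simp (config := { maxDischargeDepth := 10 }) only [jq1, jq6, hφ.map_add, phi_sub hφ, phi_neg hφ, hφ.idem, lie_neg, neg_lie, lie_add, add_lie,
      lie_sub, sub_lie, hX, hY, hZ, hpX, hpY, hpZ, hXY, hXZ, hYZ, hYX, hZX, hZY, hpXY,
      hpXZ, hpYZ, hpYX, hpZX, hpZY, b1, b2, b3, b4, b5, b6, b7, b8, b9, b10, b11, b12,
      b13, b14, b15, b16, b17, b18, c1, c2, c3, c4, c5, c6, c7, c8, c9, c10, c11, c12,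
      c13, c14, c15, c16, c17, c18, vf_bracket, vf_add, vf_sub, vf_neg, hφ.vf]
      try abel
    have jq8 : φ ⁅φ Y, X⁆ = -φ ⁅X, φ Y⁆ := by
      rw [show (⁅φ Y, X⁆ : Vec A) = -⁅X, φ Y⁆ from by
        simp only [Ring.lie_def, mul_sub, sub_mul, mul_assoc]; abel]
      simp (config := { maxDischargeDepth := 10 }) only [jq1, jq6, jq7, hφ.map_add, phi_sub hφ, phi_neg hφ, hφ.idem, lie_neg, neg_lie, lie_add, add_lie,
      lie_sub, sub_lie, hX, hY, hZ, hpX, hpY, hpZ, hXY, hXZ, hYZ, hYX, hZX, hZY, hpXY,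
      hpXZ, hpYZ, hpYX, hpZX, hpZY, b1, b2, b3, b4, b5, b6, b7, b8, b9, b10, b11, b12,
      b13, b14, b15, b16, b17, b18, c1, c2, c3, c4, c5, c6, c7, c8, c9, c10, c11, c12,
      c13, c14, c15, c16, c17, c18, vf_bracket, vf_add, vf_sub, vf_neg, hφ.vf]
      try abel
    have jq9 : φ ⁅φ Y, Z⁆ = -φ ⁅Z, φ Y⁆ := by
      rw [show (⁅φ Y, Z⁆ : Vec A) = -⁅Z, φ Y⁆ from by
        simp only [Ring.lie_def, mul_sub, sub_mul, mul_assoc]; abel]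
      simp (config := { maxDischargeDepth := 10 }) only [jq1, jq6, jq7, jq8, hφ.map_add, phi_sub hφ, phi_neg hφ, hφ.idem, lie_neg, neg_lie, lie_add, add_lie,
      lie_sub, sub_lie, hX, hY, hZ, hpX, hpY, hpZ, hXY, hXZ, hYZ, hYX, hZX, hZY, hpXY,
      hpXZ, hpYZ, hpYX, hpZX, hpZY, b1, b2, b3, b4, b5, b6, b7, b8, b9, b10, b11, b12,
      b13, b14, b15, b16, b17, b18, c1, c2, c3, c4, c5, c6, c7, c8, c9, c10, c11, c12,
      c13, c14, c15, c16, c17, c18, vf_bracket, vf_add, vf_sub, vf_neg, hφ.vf]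
      try abel
    have jq10 : φ ⁅φ Z, X⁆ = -φ ⁅X, φ Z⁆ := by
      rw [show (⁅φ Z, X⁆ : Vec A) = -⁅X, φ Z⁆ from by
        simp only [Ring.lie_def, mul_sub, sub_mul, mul_assoc]; abel]
      simp (config := { maxDischargeDepth := 10 }) only [jq1, jq6, jq7, jq8, jq9, hφ.map_add, phi_sub hφ, phi_neg hφ, hφ.idem, lie_neg, neg_lie, lie_add, add_lie,
      lie_sub, sub_lie, hX, hY, hZ, hpX, hpY, hpZ, hXY, hXZ, hYZ, hYX, hZX, hZY, hpXY,
      hpXZ, hpYZ, hpYX, hpZX, hpZY, b1, b2, b3, b4, b5, b6, b7, b8, b9, b10, b11, b12,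
      b13, b14, b15, b16, b17, b18, c1, c2, c3, c4, c5, c6, c7, c8, c9, c10, c11, c12,
      c13, c14, c15, c16, c17, c18, vf_bracket, vf_add, vf_sub, vf_neg, hφ.vf]
      try abel
    have jq11 : φ ⁅φ Z, Y⁆ = -φ ⁅Y, φ Z⁆ := by
      rw [show (⁅φ Z, Y⁆ : Vec A) = -⁅Y, φ Z⁆ from by
        simp only [Ring.lie_def, mul_sub, sub_mul, mul_assoc]; abel]
      simp (config := { maxDischargeDepth := 10 }) only [jq1, jq6, jq7, jq8, jq9, jq10, hφ.map_add, phi_sub hφ, phi_neg hφ, hφ.idem, lie_neg, neg_lie, lie_add, add_lie,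
      lie_sub, sub_lie, hX, hY, hZ, hpX, hpY, hpZ, hXY, hXZ, hYZ, hYX, hZX, hZY, hpXY,
      hpXZ, hpYZ, hpYX, hpZX, hpZY, b1, b2, b3, b4, b5, b6, b7, b8, b9, b10, b11, b12,
      b13, b14, b15, b16, b17, b18, c1, c2, c3, c4, c5, c6, c7, c8, c9, c10, c11, c12,
      c13, c14, c15, c16, c17, c18, vf_bracket, vf_add, vf_sub, vf_neg, hφ.vf]
      try abel
    have jq12 : φ ⁅X, ⁅Y, φ Z⁆⁆ = φ ⁅Y, ⁅X, φ Z⁆⁆ - φ ⁅φ Z, ⁅X, Y⁆⁆ := by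
      rw [show (⁅X, ⁅Y, φ Z⁆⁆ : Vec A) = ⁅Y, ⁅X, φ Z⁆⁆ - ⁅φ Z, ⁅X, Y⁆⁆ from by
        simp only [Ring.lie_def, mul_sub, sub_mul, mul_assoc]; abel]
      simp (config := { maxDischargeDepth := 10 }) only [jq1, jq6, jq7, jq8, jq9, jq10, jq11, hφ.map_add, phi_sub hφ, phi_neg hφ, hφ.idem, lie_neg, neg_lie, lie_add, add_lie,
      lie_sub, sub_lie, hX, hY, hZ, hpX, hpY, hpZ, hXY, hXZ, hYZ, hYX, hZX, hZY, hpXY,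
      hpXZ, hpYZ, hpYX, hpZX, hpZY, b1, b2, b3, b4, b5, b6, b7, b8, b9, b10, b11, b12,
      b13, b14, b15, b16, b17, b18, c1, c2, c3, c4, c5, c6, c7, c8, c9, c10, c11, c12,
      c13, c14, c15, c16, c17, c18, vf_bracket, vf_add, vf_sub, vf_neg, hφ.vf]
      try abel
    have jq13 : φ ⁅X, ⁅Z, φ Y⁆⁆ = φ ⁅Z, ⁅X, φ Y⁆⁆ - φ ⁅φ Y, ⁅X, Z⁆⁆ := by
      rw [show (⁅X, ⁅Z, φ Y⁆⁆ : Vec A) = ⁅Z, ⁅X, φ Y⁆⁆ - ⁅φ Y, ⁅X, Z⁆⁆ from by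
        simp only [Ring.lie_def, mul_sub, sub_mul, mul_assoc]; abel]
      simp (config := { maxDischargeDepth := 10 }) only [jq1, jq6, jq7, jq8, jq9, jq10, jq11, hφ.map_add, phi_sub hφ, phi_neg hφ, hφ.idem, lie_neg, neg_lie, lie_add, add_lie,
      lie_sub, sub_lie, hX, hY, hZ, hpX, hpY, hpZ, hXY, hXZ, hYZ, hYX, hZX, hZY, hpXY,
      hpXZ, hpYZ, hpYX, hpZX, hpZY, b1, b2, b3, b4, b5, b6, b7, b8, b9, b10, b11, b12,
      b13, b14, b15, b16, b17, b18, c1, c2, c3, c4, c5, c6, c7, c8, c9, c10, c11, c12,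
      c13, c14, c15, c16, c17, c18, vf_bracket, vf_add, vf_sub, vf_neg, hφ.vf]
      try abel
    have jq14 : φ ⁅X, ⁅φ Y, Z⁆⁆ = -φ ⁅Z, ⁅X, φ Y⁆⁆ + φ ⁅φ Y, ⁅X, Z⁆⁆ := by
      rw [show (⁅X, ⁅φ Y, Z⁆⁆ : Vec A) = -⁅Z, ⁅X, φ Y⁆⁆ + ⁅φ Y, ⁅X, Z⁆⁆ from by
        simp only [Ring.lie_def, mul_sub, sub_mul, mul_assoc]; abel]
      simp (config := { maxDischargeDepth := 10 }) only [jq1, jq6, jq7, jq8, jq9, jq10, jq11, hφ.map_add, phi_sub hφ, phi_neg hφ, hφ.idem, lie_neg, neg_lie, lie_add, add_lie,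
      lie_sub, sub_lie, hX, hY, hZ, hpX, hpY, hpZ, hXY, hXZ, hYZ, hYX, hZX, hZY, hpXY,
      hpXZ, hpYZ, hpYX, hpZX, hpZY, b1, b2, b3, b4, b5, b6, b7, b8, b9, b10, b11, b12,
      b13, b14, b15, b16, b17, b18, c1, c2, c3, c4, c5, c6, c7, c8, c9, c10, c11, c12,
      c13, c14, c15, c16, c17, c18, vf_bracket, vf_add, vf_sub, vf_neg, hφ.vf]
      try abel
    have jq15 : φ ⁅X, ⁅φ Z, Y⁆⁆ = -φ ⁅Y, ⁅X, φ Z⁆⁆ + φ ⁅φ Z, ⁅X, Y⁆⁆ := by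
      rw [show (⁅X, ⁅φ Z, Y⁆⁆ : Vec A) = -⁅Y, ⁅X, φ Z⁆⁆ + ⁅φ Z, ⁅X, Y⁆⁆ from by
        simp only [Ring.lie_def, mul_sub, sub_mul, mul_assoc]; abel]
      simp (config := { maxDischargeDepth := 10 }) only [jq1, jq6, jq7, jq8, jq9, jq10, jq11, hφ.map_add, phi_sub hφ, phi_neg hφ, hφ.idem, lie_neg, neg_lie, lie_add, add_lie,
      lie_sub, sub_lie, hX, hY, hZ, hpX, hpY, hpZ, hXY, hXZ, hYZ, hYX, hZX, hZY, hpXY,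
      hpXZ, hpYZ, hpYX, hpZX, hpZY, b1, b2, b3, b4, b5, b6, b7, b8, b9, b10, b11, b12,
      b13, b14, b15, b16, b17, b18, c1, c2, c3, c4, c5, c6, c7, c8, c9, c10, c11, c12,
      c13, c14, c15, c16, c17, c18, vf_bracket, vf_add, vf_sub, vf_neg, hφ.vf]
      try abel
    have jq16 : φ ⁅Y, ⁅Z, φ X⁆⁆ = φ ⁅Z, ⁅Y, φ X⁆⁆ - φ ⁅φ X, ⁅Y, Z⁆⁆ := by
      rw [show (⁅Y, ⁅Z, φ X⁆⁆ : Vec A) = ⁅Z, ⁅Y, φ X⁆⁆ - ⁅φ X, ⁅Y, Z⁆⁆ from by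
        simp only [Ring.lie_def, mul_sub, sub_mul, mul_assoc]; abel]
      simp (config := { maxDischargeDepth := 10 }) only [jq1, jq6, jq7, jq8, jq9, jq10, jq11, hφ.map_add, phi_sub hφ, phi_neg hφ, hφ.idem, lie_neg, neg_lie, lie_add, add_lie,
      lie_sub, sub_lie, hX, hY, hZ, hpX, hpY, hpZ, hXY, hXZ, hYZ, hYX, hZX, hZY, hpXY,
      hpXZ, hpYZ, hpYX, hpZX, hpZY, b1, b2, b3, b4, b5, b6, b7, b8, b9, b10, b11, b12,
      b13, b14, b15, b16, b17, b18, c1, c2, c3, c4, c5, c6, c7, c8, c9, c10, c11, c12,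
      c13, c14, c15, c16, c17, c18, vf_bracket, vf_add, vf_sub, vf_neg, hφ.vf]
      try abel
    have jq17 : φ ⁅Y, ⁅φ X, Z⁆⁆ = -φ ⁅Z, ⁅Y, φ X⁆⁆ + φ ⁅φ X, ⁅Y, Z⁆⁆ := by
      rw [show (⁅Y, ⁅φ X, Z⁆⁆ : Vec A) = -⁅Z, ⁅Y, φ X⁆⁆ + ⁅φ X, ⁅Y, Z⁆⁆ from by
        simp only [Ring.lie_def, mul_sub, sub_mul, mul_assoc]; abel]
      simp (config := { maxDischargeDepth := 10 }) only [jq1, jq6, jq7, jq8, jq9, jq10, jq11, hφ.map_add, phi_sub hφ, phi_neg hφ, hφ.idem, lie_neg, neg_lie, lie_add, add_lie,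
      lie_sub, sub_lie, hX, hY, hZ, hpX, hpY, hpZ, hXY, hXZ, hYZ, hYX, hZX, hZY, hpXY,
      hpXZ, hpYZ, hpYX, hpZX, hpZY, b1, b2, b3, b4, b5, b6, b7, b8, b9, b10, b11, b12,
      b13, b14, b15, b16, b17, b18, c1, c2, c3, c4, c5, c6, c7, c8, c9, c10, c11, c12,
      c13, c14, c15, c16, c17, c18, vf_bracket, vf_add, vf_sub, vf_neg, hφ.vf]
      try abel
    have jq18 : φ ⁅Y, ⁅φ Z, X⁆⁆ = -φ ⁅Y, ⁅X, φ Z⁆⁆ := by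
      rw [show (⁅Y, ⁅φ Z, X⁆⁆ : Vec A) = -⁅Y, ⁅X, φ Z⁆⁆ from by
        simp only [Ring.lie_def, mul_sub, sub_mul, mul_assoc]; abel]
      simp (config := { maxDischargeDepth := 10 }) only [jq1, jq6, jq7, jq8, jq9, jq10, jq11, hφ.map_add, phi_sub hφ, phi_neg hφ, hφ.idem, lie_neg, neg_lie, lie_add, add_lie,
      lie_sub, sub_lie, hX, hY, hZ, hpX, hpY, hpZ, hXY, hXZ, hYZ, hYX, hZX, hZY, hpXY,
      hpXZ, hpYZ, hpYX, hpZX, hpZY, b1, b2, b3, b4, b5, b6, b7, b8, b9, b10, b11, b12,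
      b13, b14, b15, b16, b17, b18, c1, c2, c3, c4, c5, c6, c7, c8, c9, c10, c11, c12,
      c13, c14, c15, c16, c17, c18, vf_bracket, vf_add, vf_sub, vf_neg, hφ.vf]
      try abel
    have jq19 : φ ⁅Z, ⁅φ X, Y⁆⁆ = -φ ⁅Z, ⁅Y, φ X⁆⁆ := by
      rw [show (⁅Z, ⁅φ X, Y⁆⁆ : Vec A) = -⁅Z, ⁅Y, φ X⁆⁆ from by
        simp only [Ring.lie_def, mul_sub, sub_mul, mul_assoc]; abel]
      simp (config := { maxDischargeDepth := 10 }) only [jq1, jq6, jq7, jq8, jq9, jq10, jq11, hφ.map_add, phi_sub hφ, phi_neg hφ, hφ.idem, lie_neg, neg_lie, lie_add, add_lie,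
      lie_sub, sub_lie, hX, hY, hZ, hpX, hpY, hpZ, hXY, hXZ, hYZ, hYX, hZX, hZY, hpXY,
      hpXZ, hpYZ, hpYX, hpZX, hpZY, b1, b2, b3, b4, b5, b6, b7, b8, b9, b10, b11, b12,
      b13, b14, b15, b16, b17, b18, c1, c2, c3, c4, c5, c6, c7, c8, c9, c10, c11, c12,
      c13, c14, c15, c16, c17, c18, vf_bracket, vf_add, vf_sub, vf_neg, hφ.vf]
      try abel
    have jq20 : φ ⁅Z, ⁅φ Y, X⁆⁆ = -φ ⁅Z, ⁅X, φ Y⁆⁆ := by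
      rw [show (⁅Z, ⁅φ Y, X⁆⁆ : Vec A) = -⁅Z, ⁅X, φ Y⁆⁆ from by
        simp only [Ring.lie_def, mul_sub, sub_mul, mul_assoc]; abel]
      simp (config := { maxDischargeDepth := 10 }) only [jq1, jq6, jq7, jq8, jq9, jq10, jq11, hφ.map_add, phi_sub hφ, phi_neg hφ, hφ.idem, lie_neg, neg_lie, lie_add, add_lie,
      lie_sub, sub_lie, hX, hY, hZ, hpX, hpY, hpZ, hXY, hXZ, hYZ, hYX, hZX, hZY, hpXY,
      hpXZ, hpYZ, hpYX, hpZX, hpZY, b1, b2, b3, b4, b5, b6, b7, b8, b9, b10, b11, b12,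
      b13, b14, b15, b16, b17, b18, c1, c2, c3, c4, c5, c6, c7, c8, c9, c10, c11, c12,
      c13, c14, c15, c16, c17, c18, vf_bracket, vf_add, vf_sub, vf_neg, hφ.vf]
      try abel
    have jq21 : φ ⁅φ X, ⁅Z, Y⁆⁆ = -φ ⁅φ X, ⁅Y, Z⁆⁆ := by
      rw [show (⁅φ X, ⁅Z, Y⁆⁆ : Vec A) = -⁅φ X, ⁅Y, Z⁆⁆ from by
        simp only [Ring.lie_def, mul_sub, sub_mul, mul_assoc]; abel]
      simp (config := { maxDischargeDepth := 10 }) only [jq1, jq6, jq7, jq8, jq9, jq10, jq11, hφ.map_add, phi_sub hφ, phi_neg hφ, hφ.idem, lie_neg, neg_lie, lie_add, add_lie,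
      lie_sub, sub_lie, hX, hY, hZ, hpX, hpY, hpZ, hXY, hXZ, hYZ, hYX, hZX, hZY, hpXY,
      hpXZ, hpYZ, hpYX, hpZX, hpZY, b1, b2, b3, b4, b5, b6, b7, b8, b9, b10, b11, b12,
      b13, b14, b15, b16, b17, b18, c1, c2, c3, c4, c5, c6, c7, c8, c9, c10, c11, c12,
      c13, c14, c15, c16, c17, c18, vf_bracket, vf_add, vf_sub, vf_neg, hφ.vf]
      try abel
    have jq22 : φ ⁅φ Y, φ X⁆ = -φ ⁅φ X, φ Y⁆ := by
      rw [show (⁅φ Y, φ X⁆ : Vec A) = -⁅φ X, φ Y⁆ from by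
        simp only [Ring.lie_def, mul_sub, sub_mul, mul_assoc]; abel]
      simp (config := { maxDischargeDepth := 10 }) only [jq1, jq6, jq7, jq8, jq9, jq10, jq11, hφ.map_add, phi_sub hφ, phi_neg hφ, hφ.idem, lie_neg, neg_lie, lie_add, add_lie,
      lie_sub, sub_lie, hX, hY, hZ, hpX, hpY, hpZ, hXY, hXZ, hYZ, hYX, hZX, hZY, hpXY,
      hpXZ, hpYZ, hpYX, hpZX, hpZY, b1, b2, b3, b4, b5, b6, b7, b8, b9, b10, b11, b12,
      b13, b14, b15, b16, b17, b18, c1, c2, c3, c4, c5, c6, c7, c8, c9, c10, c11, c12,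
      c13, c14, c15, c16, c17, c18, vf_bracket, vf_add, vf_sub, vf_neg, hφ.vf]
      try abel
    have jq23 : φ ⁅φ Y, ⁅Z, X⁆⁆ = -φ ⁅φ Y, ⁅X, Z⁆⁆ := by
      rw [show (⁅φ Y, ⁅Z, X⁆⁆ : Vec A) = -⁅φ Y, ⁅X, Z⁆⁆ from by
        simp only [Ring.lie_def, mul_sub, sub_mul, mul_assoc]; abel]
      simp (config := { maxDischargeDepth := 10 }) only [jq1, jq6, jq7, jq8, jq9, jq10, jq11, jq22, hφ.map_add, phi_sub hφ, phi_neg hφ, hφ.idem, lie_neg, neg_lie, lie_add, add_lie,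
      lie_sub, sub_lie, hX, hY, hZ, hpX, hpY, hpZ, hXY, hXZ, hYZ, hYX, hZX, hZY, hpXY,
      hpXZ, hpYZ, hpYX, hpZX, hpZY, b1, b2, b3, b4, b5, b6, b7, b8, b9, b10, b11, b12,
      b13, b14, b15, b16, b17, b18, c1, c2, c3, c4, c5, c6, c7, c8, c9, c10, c11, c12,
      c13, c14, c15, c16, c17, c18, vf_bracket, vf_add, vf_sub, vf_neg, hφ.vf]
      try abel
    have jq24 : φ ⁅φ Z, φ X⁆ = -φ ⁅φ X, φ Z⁆ := by
      rw [show (⁅φ Z, φ X⁆ : Vec A) = -⁅φ X, φ Z⁆ from by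
        simp only [Ring.lie_def, mul_sub, sub_mul, mul_assoc]; abel]
      simp (config := { maxDischargeDepth := 10 }) only [jq1, jq6, jq7, jq8, jq9, jq10, jq11, jq22, hφ.map_add, phi_sub hφ, phi_neg hφ, hφ.idem, lie_neg, neg_lie, lie_add, add_lie,
      lie_sub, sub_lie, hX, hY, hZ, hpX, hpY, hpZ, hXY, hXZ, hYZ, hYX, hZX, hZY, hpXY,
      hpXZ, hpYZ, hpYX, hpZX, hpZY, b1, b2, b3, b4, b5, b6, b7, b8, b9, b10, b11, b12,
      b13, b14, b15, b16, b17, b18, c1, c2, c3, c4, c5, c6, c7, c8, c9, c10, c11, c12,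
      c13, c14, c15, c16, c17, c18, vf_bracket, vf_add, vf_sub, vf_neg, hφ.vf]
      try abel
    have jq25 : φ ⁅φ Z, φ Y⁆ = -φ ⁅φ Y, φ Z⁆ := by
      rw [show (⁅φ Z, φ Y⁆ : Vec A) = -⁅φ Y, φ Z⁆ from by
        simp only [Ring.lie_def, mul_sub, sub_mul, mul_assoc]; abel]
      simp (config := { maxDischargeDepth := 10 }) only [jq1, jq6, jq7, jq8, jq9, jq10, jq11, jq22, jq24, hφ.map_add, phi_sub hφ, phi_neg hφ, hφ.idem, lie_neg, neg_lie, lie_add, add_lie,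
      lie_sub, sub_lie, hX, hY, hZ, hpX, hpY, hpZ, hXY, hXZ, hYZ, hYX, hZX, hZY, hpXY,
      hpXZ, hpYZ, hpYX, hpZX, hpZY, b1, b2, b3, b4, b5, b6, b7, b8, b9, b10, b11, b12,
      b13, b14, b15, b16, b17, b18, c1, c2, c3, c4, c5, c6, c7, c8, c9, c10, c11, c12,
      c13, c14, c15, c16, c17, c18, vf_bracket, vf_add, vf_sub, vf_neg, hφ.vf]
      try abel
    have jq26 : φ ⁅φ Z, ⁅Y, X⁆⁆ = -φ ⁅φ Z, ⁅X, Y⁆⁆ := by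
      rw [show (⁅φ Z, ⁅Y, X⁆⁆ : Vec A) = -⁅φ Z, ⁅X, Y⁆⁆ from by
        simp only [Ring.lie_def, mul_sub, sub_mul, mul_assoc]; abel]
      simp (config := { maxDischargeDepth := 10 }) only [jq1, jq6, jq7, jq8, jq9, jq10, jq11, jq22, jq24, jq25, hφ.map_add, phi_sub hφ, phi_neg hφ, hφ.idem, lie_neg, neg_lie, lie_add, add_lie,
      lie_sub, sub_lie, hX, hY, hZ, hpX, hpY, hpZ, hXY, hXZ, hYZ, hYX, hZX, hZY, hpXY,
      hpXZ, hpYZ, hpYX, hpZX, hpZY, b1, b2, b3, b4, b5, b6, b7, b8, b9, b10, b11, b12,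
      b13, b14, b15, b16, b17, b18, c1, c2, c3, c4, c5, c6, c7, c8, c9, c10, c11, c12,
      c13, c14, c15, c16, c17, c18, vf_bracket, vf_add, vf_sub, vf_neg, hφ.vf]
      try abel
    have jq27 : φ ⁅φ ⁅X, Y⁆, Z⁆ = -φ ⁅Z, φ ⁅X, Y⁆⁆ := by
      rw [show (⁅φ ⁅X, Y⁆, Z⁆ : Vec A) = -⁅Z, φ ⁅X, Y⁆⁆ from by
        simp only [Ring.lie_def, mul_sub, sub_mul, mul_assoc]; abel]
      simp (config := { maxDischargeDepth := 10 }) only [jq1, jq6, jq7, jq8, jq9, jq10, jq11, jq22, jq24, jq25, hφ.map_add, phi_sub hφ, phi_neg hφ, hφ.idem, lie_neg, neg_lie, lie_add, add_lie,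
      lie_sub, sub_lie, hX, hY, hZ, hpX, hpY, hpZ, hXY, hXZ, hYZ, hYX, hZX, hZY, hpXY,
      hpXZ, hpYZ, hpYX, hpZX, hpZY, b1, b2, b3, b4, b5, b6, b7, b8, b9, b10, b11, b12,
      b13, b14, b15, b16, b17, b18, c1, c2, c3, c4, c5, c6, c7, c8, c9, c10, c11, c12,
      c13, c14, c15, c16, c17, c18, vf_bracket, vf_add, vf_sub, vf_neg, hφ.vf]
      try abel
    have jq28 : φ ⁅φ ⁅X, Z⁆, Y⁆ = -φ ⁅Y, φ ⁅X, Z⁆⁆ := by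
      rw [show (⁅φ ⁅X, Z⁆, Y⁆ : Vec A) = -⁅Y, φ ⁅X, Z⁆⁆ from by
        simp only [Ring.lie_def, mul_sub, sub_mul, mul_assoc]; abel]
      simp (config := { maxDischargeDepth := 10 }) only [jq1, jq6, jq7, jq8, jq9, jq10, jq11, jq22, jq24, jq25, hφ.map_add, phi_sub hφ, phi_neg hφ, hφ.idem, lie_neg, neg_lie, lie_add, add_lie,
      lie_sub, sub_lie, hX, hY, hZ, hpX, hpY, hpZ, hXY, hXZ, hYZ, hYX, hZX, hZY, hpXY,
      hpXZ, hpYZ, hpYX, hpZX, hpZY, b1, b2, b3, b4, b5, b6, b7, b8, b9, b10, b11, b12,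
      b13, b14, b15, b16, b17, b18, c1, c2, c3, c4, c5, c6, c7, c8, c9, c10, c11, c12,
      c13, c14, c15, c16, c17, c18, vf_bracket, vf_add, vf_sub, vf_neg, hφ.vf]
      try abel
    have jq29 : φ ⁅φ ⁅Y, Z⁆, X⁆ = -φ ⁅X, φ ⁅Y, Z⁆⁆ := by
      rw [show (⁅φ ⁅Y, Z⁆, X⁆ : Vec A) = -⁅X, φ ⁅Y, Z⁆⁆ from by
        simp only [Ring.lie_def, mul_sub, sub_mul, mul_assoc]; abel]
      simp (config := { maxDischargeDepth := 10 }) only [jq1, jq6, jq7, jq8, jq9, jq10, jq11, jq22, jq24, jq25, hφ.map_add, phi_sub hφ, phi_neg hφ, hφ.idem, lie_neg, neg_lie, lie_add, add_lie,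
      lie_sub, sub_lie, hX, hY, hZ, hpX, hpY, hpZ, hXY, hXZ, hYZ, hYX, hZX, hZY, hpXY,
      hpXZ, hpYZ, hpYX, hpZX, hpZY, b1, b2, b3, b4, b5, b6, b7, b8, b9, b10, b11, b12,
      b13, b14, b15, b16, b17, b18, c1, c2, c3, c4, c5, c6, c7, c8, c9, c10, c11, c12,
      c13, c14, c15, c16, c17, c18, vf_bracket, vf_add, vf_sub, vf_neg, hφ.vf]
      try abel
    have jq30 : φ ⁅φ ⁅Z, X⁆, Y⁆ = φ ⁅Y, φ ⁅X, Z⁆⁆ := by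
      rw [show (⁅φ ⁅Z, X⁆, Y⁆ : Vec A) = -⁅Y, φ ⁅Z, X⁆⁆ from by
        simp only [Ring.lie_def, mul_sub, sub_mul, mul_assoc]; abel]
      simp (config := { maxDischargeDepth := 10 }) only [jq1, jq6, jq7, jq8, jq9, jq10, jq11, jq22, jq24, jq25, hφ.map_add, phi_sub hφ, phi_neg hφ, hφ.idem, lie_neg, neg_lie, lie_add, add_lie,
      lie_sub, sub_lie, hX, hY, hZ, hpX, hpY, hpZ, hXY, hXZ, hYZ, hYX, hZX, hZY, hpXY,
      hpXZ, hpYZ, hpYX, hpZX, hpZY, b1, b2, b3, b4, b5, b6, b7, b8, b9, b10, b11, b12,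
      b13, b14, b15, b16, b17, b18, c1, c2, c3, c4, c5, c6, c7, c8, c9, c10, c11, c12,
      c13, c14, c15, c16, c17, c18, vf_bracket, vf_add, vf_sub, vf_neg, hφ.vf]
      try abel
    have jq31 : φ ⁅X, ⁅φ Y, φ Z⁆⁆ = φ ⁅φ Y, ⁅X, φ Z⁆⁆ - φ ⁅φ Z, ⁅X, φ Y⁆⁆ := by
      rw [show (⁅X, ⁅φ Y, φ Z⁆⁆ : Vec A) = ⁅φ Y, ⁅X, φ Z⁆⁆ - ⁅φ Z, ⁅X, φ Y⁆⁆ from by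
        simp only [Ring.lie_def, mul_sub, sub_mul, mul_assoc]; abel]
      simp (config := { maxDischargeDepth := 10 }) only [jq1, jq6, jq7, jq8, jq9, jq10, jq11, jq22, jq24, jq25, hφ.map_add, phi_sub hφ, phi_neg hφ, hφ.idem, lie_neg, neg_lie, lie_add, add_lie,
      lie_sub, sub_lie, hX, hY, hZ, hpX, hpY, hpZ, hXY, hXZ, hYZ, hYX, hZX, hZY, hpXY,
      hpXZ, hpYZ, hpYX, hpZX, hpZY, b1, b2, b3, b4, b5, b6, b7, b8, b9, b10, b11, b12,
      b13, b14, b15, b16, b17, b18, c1, c2, c3, c4, c5, c6, c7, c8, c9, c10, c11, c12,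
      c13, c14, c15, c16, c17, c18, vf_bracket, vf_add, vf_sub, vf_neg, hφ.vf]
      try abel
    have jq32 : φ ⁅X, ⁅φ Z, φ Y⁆⁆ = -φ ⁅φ Y, ⁅X, φ Z⁆⁆ + φ ⁅φ Z, ⁅X, φ Y⁆⁆ := by
      rw [show (⁅X, ⁅φ Z, φ Y⁆⁆ : Vec A) = -⁅φ Y, ⁅X, φ Z⁆⁆ + ⁅φ Z, ⁅X, φ Y⁆⁆ from by
        simp only [Ring.lie_def, mul_sub, sub_mul, mul_assoc]; abel]
      simp (config := { maxDischargeDepth := 10 }) only [jq1, jq6, jq7, jq8, jq9, jq10, jq11, jq22, jq24, jq25, hφ.map_add, phi_sub hφ, phi_neg hφ, hφ.idem, lie_neg, neg_lie, lie_add, add_lie,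
      lie_sub, sub_lie, hX, hY, hZ, hpX, hpY, hpZ, hXY, hXZ, hYZ, hYX, hZX, hZY, hpXY,
      hpXZ, hpYZ, hpYX, hpZX, hpZY, b1, b2, b3, b4, b5, b6, b7, b8, b9, b10, b11, b12,
      b13, b14, b15, b16, b17, b18, c1, c2, c3, c4, c5, c6, c7, c8, c9, c10, c11, c12,
      c13, c14, c15, c16, c17, c18, vf_bracket, vf_add, vf_sub, vf_neg, hφ.vf]
      try abel
    have jq33 : φ ⁅Y, ⁅φ X, φ Z⁆⁆ = φ ⁅φ X, ⁅Y, φ Z⁆⁆ - φ ⁅φ Z, ⁅Y, φ X⁆⁆ := by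
      rw [show (⁅Y, ⁅φ X, φ Z⁆⁆ : Vec A) = ⁅φ X, ⁅Y, φ Z⁆⁆ - ⁅φ Z, ⁅Y, φ X⁆⁆ from by
        simp only [Ring.lie_def, mul_sub, sub_mul, mul_assoc]; abel]
      simp (config := { maxDischargeDepth := 10 }) only [jq1, jq6, jq7, jq8, jq9, jq10, jq11, jq22, jq24, jq25, hφ.map_add, phi_sub hφ, phi_neg hφ, hφ.idem, lie_neg, neg_lie, lie_add, add_lie,
      lie_sub, sub_lie, hX, hY, hZ, hpX, hpY, hpZ, hXY, hXZ, hYZ, hYX, hZX, hZY, hpXY,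
      hpXZ, hpYZ, hpYX, hpZX, hpZY, b1, b2, b3, b4, b5, b6, b7, b8, b9, b10, b11, b12,
      b13, b14, b15, b16, b17, b18, c1, c2, c3, c4, c5, c6, c7, c8, c9, c10, c11, c12,
      c13, c14, c15, c16, c17, c18, vf_bracket, vf_add, vf_sub, vf_neg, hφ.vf]
      try abel
    have jq34 : φ ⁅Y, ⁅φ Z, φ X⁆⁆ = -φ ⁅φ X, ⁅Y, φ Z⁆⁆ + φ ⁅φ Z, ⁅Y, φ X⁆⁆ := by
      rw [show (⁅Y, ⁅φ Z, φ X⁆⁆ : Vec A) = -⁅φ X, ⁅Y, φ Z⁆⁆ + ⁅φ Z, ⁅Y, φ X⁆⁆ from by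
        simp only [Ring.lie_def, mul_sub, sub_mul, mul_assoc]; abel]
      simp (config := { maxDischargeDepth := 10 }) only [jq1, jq6, jq7, jq8, jq9, jq10, jq11, jq22, jq24, jq25, hφ.map_add, phi_sub hφ, phi_neg hφ, hφ.idem, lie_neg, neg_lie, lie_add, add_lie,
      lie_sub, sub_lie, hX, hY, hZ, hpX, hpY, hpZ, hXY, hXZ, hYZ, hYX, hZX, hZY, hpXY,
      hpXZ, hpYZ, hpYX, hpZX, hpZY, b1, b2, b3, b4, b5, b6, b7, b8, b9, b10, b11, b12,
      b13, b14, b15, b16, b17, b18, c1, c2, c3, c4, c5, c6, c7, c8, c9, c10, c11, c12,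
      c13, c14, c15, c16, c17, c18, vf_bracket, vf_add, vf_sub, vf_neg, hφ.vf]
      try abel
    have jq35 : φ ⁅Z, ⁅φ X, φ Y⁆⁆ = φ ⁅φ X, ⁅Z, φ Y⁆⁆ - φ ⁅φ Y, ⁅Z, φ X⁆⁆ := by
      rw [show (⁅Z, ⁅φ X, φ Y⁆⁆ : Vec A) = ⁅φ X, ⁅Z, φ Y⁆⁆ - ⁅φ Y, ⁅Z, φ X⁆⁆ from by
        simp only [Ring.lie_def, mul_sub, sub_mul, mul_assoc]; abel]
      simp (config := { maxDischargeDepth := 10 }) only [jq1, jq6, jq7, jq8, jq9, jq10, jq11, jq22, jq24, jq25, hφ.map_add, phi_sub hφ, phi_neg hφ, hφ.idem, lie_neg, neg_lie, lie_add, add_lie,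
      lie_sub, sub_lie, hX, hY, hZ, hpX, hpY, hpZ, hXY, hXZ, hYZ, hYX, hZX, hZY, hpXY,
      hpXZ, hpYZ, hpYX, hpZX, hpZY, b1, b2, b3, b4, b5, b6, b7, b8, b9, b10, b11, b12,
      b13, b14, b15, b16, b17, b18, c1, c2, c3, c4, c5, c6, c7, c8, c9, c10, c11, c12,
      c13, c14, c15, c16, c17, c18, vf_bracket, vf_add, vf_sub, vf_neg, hφ.vf]
      try abel
    have jq36 : φ ⁅Z, ⁅φ Y, φ X⁆⁆ = -φ ⁅φ X, ⁅Z, φ Y⁆⁆ + φ ⁅φ Y, ⁅Z, φ X⁆⁆ := by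
      rw [show (⁅Z, ⁅φ Y, φ X⁆⁆ : Vec A) = -⁅φ X, ⁅Z, φ Y⁆⁆ + ⁅φ Y, ⁅Z, φ X⁆⁆ from by
        simp only [Ring.lie_def, mul_sub, sub_mul, mul_assoc]; abel]
      simp (config := { maxDischargeDepth := 10 }) only [jq1, jq6, jq7, jq8, jq9, jq10, jq11, jq22, jq24, jq25, hφ.map_add, phi_sub hφ, phi_neg hφ, hφ.idem, lie_neg, neg_lie, lie_add, add_lie,
      lie_sub, sub_lie, hX, hY, hZ, hpX, hpY, hpZ, hXY, hXZ, hYZ, hYX, hZX, hZY, hpXY,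
      hpXZ, hpYZ, hpYX, hpZX, hpZY, b1, b2, b3, b4, b5, b6, b7, b8, b9, b10, b11, b12,
      b13, b14, b15, b16, b17, b18, c1, c2, c3, c4, c5, c6, c7, c8, c9, c10, c11, c12,
      c13, c14, c15, c16, c17, c18, vf_bracket, vf_add, vf_sub, vf_neg, hφ.vf]
      try abel
    have jq37 : φ ⁅φ X, ⁅φ Y, Z⁆⁆ = -φ ⁅φ X, ⁅Z, φ Y⁆⁆ := by
      rw [show (⁅φ X, ⁅φ Y, Z⁆⁆ : Vec A) = -⁅φ X, ⁅Z, φ Y⁆⁆ from by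
        simp only [Ring.lie_def, mul_sub, sub_mul, mul_assoc]; abel]
      simp (config := { maxDischargeDepth := 10 }) only [jq1, jq6, jq7, jq8, jq9, jq10, jq11, jq22, jq24, jq25, hφ.map_add, phi_sub hφ, phi_neg hφ, hφ.idem, lie_neg, neg_lie, lie_add, add_lie,
      lie_sub, sub_lie, hX, hY, hZ, hpX, hpY, hpZ, hXY, hXZ, hYZ, hYX, hZX, hZY, hpXY,
      hpXZ, hpYZ, hpYX, hpZX, hpZY, b1, b2, b3, b4, b5, b6, b7, b8, b9, b10, b11, b12,
      b13, b14, b15, b16, b17, b18, c1, c2, c3, c4, c5, c6, c7, c8, c9, c10, c11, c12,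
      c13, c14, c15, c16, c17, c18, vf_bracket, vf_add, vf_sub, vf_neg, hφ.vf]
      try abel
    have jq38 : φ ⁅φ X, ⁅φ Z, Y⁆⁆ = -φ ⁅φ X, ⁅Y, φ Z⁆⁆ := by
      rw [show (⁅φ X, ⁅φ Z, Y⁆⁆ : Vec A) = -⁅φ X, ⁅Y, φ Z⁆⁆ from by
        simp only [Ring.lie_def, mul_sub, sub_mul, mul_assoc]; abel]
      simp (config := { maxDischargeDepth := 10 }) only [jq1, jq6, jq7, jq8, jq9, jq10, jq11, jq22, jq24, jq25, hφ.map_add, phi_sub hφ, phi_neg hφ, hφ.idem, lie_neg, neg_lie, lie_add, add_lie,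
      lie_sub, sub_lie, hX, hY, hZ, hpX, hpY, hpZ, hXY, hXZ, hYZ, hYX, hZX, hZY, hpXY,
      hpXZ, hpYZ, hpYX, hpZX, hpZY, b1, b2, b3, b4, b5, b6, b7, b8, b9, b10, b11, b12,
      b13, b14, b15, b16, b17, b18, c1, c2, c3, c4, c5, c6, c7, c8, c9, c10, c11, c12,
      c13, c14, c15, c16, c17, c18, vf_bracket, vf_add, vf_sub, vf_neg, hφ.vf]
      try abel
    have jq39 : φ ⁅φ Y, ⁅φ X, Z⁆⁆ = -φ ⁅φ Y, ⁅Z, φ X⁆⁆ := by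
      rw [show (⁅φ Y, ⁅φ X, Z⁆⁆ : Vec A) = -⁅φ Y, ⁅Z, φ X⁆⁆ from by
        simp only [Ring.lie_def, mul_sub, sub_mul, mul_assoc]; abel]
      simp (config := { maxDischargeDepth := 10 }) only [jq1, jq6, jq7, jq8, jq9, jq10, jq11, jq22, jq24, jq25, hφ.map_add, phi_sub hφ, phi_neg hφ, hφ.idem, lie_neg, neg_lie, lie_add, add_lie,
      lie_sub, sub_lie, hX, hY, hZ, hpX, hpY, hpZ, hXY, hXZ, hYZ, hYX, hZX, hZY, hpXY,
      hpXZ, hpYZ, hpYX, hpZX, hpZY, b1, b2, b3, b4, b5, b6, b7, b8, b9, b10, b11, b12,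
      b13, b14, b15, b16, b17, b18, c1, c2, c3, c4, c5, c6, c7, c8, c9, c10, c11, c12,
      c13, c14, c15, c16, c17, c18, vf_bracket, vf_add, vf_sub, vf_neg, hφ.vf]
      try abel
    have jq40 : φ ⁅φ Y, ⁅φ Z, X⁆⁆ = -φ ⁅φ Y, ⁅X, φ Z⁆⁆ := by
      rw [show (⁅φ Y, ⁅φ Z, X⁆⁆ : Vec A) = -⁅φ Y, ⁅X, φ Z⁆⁆ from by
        simp only [Ring.lie_def, mul_sub, sub_mul, mul_assoc]; abel]
      simp (config := { maxDischargeDepth := 10 }) only [jq1, jq6, jq7, jq8, jq9, jq10, jq11, jq22, jq24, jq25, hφ.map_add, phi_sub hφ, phi_neg hφ, hφ.idem, lie_neg, neg_lie, lie_add, add_lie,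
      lie_sub, sub_lie, hX, hY, hZ, hpX, hpY, hpZ, hXY, hXZ, hYZ, hYX, hZX, hZY, hpXY,
      hpXZ, hpYZ, hpYX, hpZX, hpZY, b1, b2, b3, b4, b5, b6, b7, b8, b9, b10, b11, b12,
      b13, b14, b15, b16, b17, b18, c1, c2, c3, c4, c5, c6, c7, c8, c9, c10, c11, c12,
      c13, c14, c15, c16, c17, c18, vf_bracket, vf_add, vf_sub, vf_neg, hφ.vf]
      try abel
    have jq41 : φ ⁅φ Z, ⁅φ X, Y⁆⁆ = -φ ⁅φ Z, ⁅Y, φ X⁆⁆ := by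
      rw [show (⁅φ Z, ⁅φ X, Y⁆⁆ : Vec A) = -⁅φ Z, ⁅Y, φ X⁆⁆ from by
        simp only [Ring.lie_def, mul_sub, sub_mul, mul_assoc]; abel]
      simp (config := { maxDischargeDepth := 10 }) only [jq1, jq6, jq7, jq8, jq9, jq10, jq11, jq22, jq24, jq25, hφ.map_add, phi_sub hφ, phi_neg hφ, hφ.idem, lie_neg, neg_lie, lie_add, add_lie,
      lie_sub, sub_lie, hX, hY, hZ, hpX, hpY, hpZ, hXY, hXZ, hYZ, hYX, hZX, hZY, hpXY,
      hpXZ, hpYZ, hpYX, hpZX, hpZY, b1, b2, b3, b4, b5, b6, b7, b8, b9, b10, b11, b12,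
      b13, b14, b15, b16, b17, b18, c1, c2, c3, c4, c5, c6, c7, c8, c9, c10, c11, c12,
      c13, c14, c15, c16, c17, c18, vf_bracket, vf_add, vf_sub, vf_neg, hφ.vf]
      try abel
    have jq42 : φ ⁅φ Z, ⁅φ Y, X⁆⁆ = -φ ⁅φ Z, ⁅X, φ Y⁆⁆ := by
      rw [show (⁅φ Z, ⁅φ Y, X⁆⁆ : Vec A) = -⁅φ Z, ⁅X, φ Y⁆⁆ from by
        simp only [Ring.lie_def, mul_sub, sub_mul, mul_assoc]; abel]
      simp (config := { maxDischargeDepth := 10 }) only [jq1, jq6, jq7, jq8, jq9, jq10, jq11, jq22, jq24, jq25, hφ.map_add, phi_sub hφ, phi_neg hφ, hφ.idem, lie_neg, neg_lie, lie_add, add_lie,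
      lie_sub, sub_lie, hX, hY, hZ, hpX, hpY, hpZ, hXY, hXZ, hYZ, hYX, hZX, hZY, hpXY,
      hpXZ, hpYZ, hpYX, hpZX, hpZY, b1, b2, b3, b4, b5, b6, b7, b8, b9, b10, b11, b12,
      b13, b14, b15, b16, b17, b18, c1, c2, c3, c4, c5, c6, c7, c8, c9, c10, c11, c12,
      c13, c14, c15, c16, c17, c18, vf_bracket, vf_add, vf_sub, vf_neg, hφ.vf]
      try abel
    have jq43 : φ ⁅φ ⁅X, Y⁆, φ Z⁆ = -φ ⁅φ Z, φ ⁅X, Y⁆⁆ := by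
      rw [show (⁅φ ⁅X, Y⁆, φ Z⁆ : Vec A) = -⁅φ Z, φ ⁅X, Y⁆⁆ from by
        simp only [Ring.lie_def, mul_sub, sub_mul, mul_assoc]; abel]
      simp (config := { maxDischargeDepth := 10 }) only [jq1, jq6, jq7, jq8, jq9, jq10, jq11, jq22, jq24, jq25, hφ.map_add, phi_sub hφ, phi_neg hφ, hφ.idem, lie_neg, neg_lie, lie_add, add_lie,
      lie_sub, sub_lie, hX, hY, hZ, hpX, hpY, hpZ, hXY, hXZ, hYZ, hYX, hZX, hZY, hpXY,
      hpXZ, hpYZ, hpYX, hpZX, hpZY, b1, b2, b3, b4, b5, b6, b7, b8, b9, b10, b11, b12,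
      b13, b14, b15, b16, b17, b18, c1, c2, c3, c4, c5, c6, c7, c8, c9, c10, c11, c12,
      c13, c14, c15, c16, c17, c18, vf_bracket, vf_add, vf_sub, vf_neg, hφ.vf]
      try abel
    have jq44 : φ ⁅φ ⁅X, Z⁆, φ Y⁆ = -φ ⁅φ Y, φ ⁅X, Z⁆⁆ := by
      rw [show (⁅φ ⁅X, Z⁆, φ Y⁆ : Vec A) = -⁅φ Y, φ ⁅X, Z⁆⁆ from by
        simp only [Ring.lie_def, mul_sub, sub_mul, mul_assoc]; abel]
      simp (config := { maxDischargeDepth := 10 }) only [jq1, jq6, jq7, jq8, jq9, jq10, jq11, jq22, jq24, jq25, hφ.map_add, phi_sub hφ, phi_neg hφ, hφ.idem, lie_neg, neg_lie, lie_add, add_lie,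
      lie_sub, sub_lie, hX, hY, hZ, hpX, hpY, hpZ, hXY, hXZ, hYZ, hYX, hZX, hZY, hpXY,
      hpXZ, hpYZ, hpYX, hpZX, hpZY, b1, b2, b3, b4, b5, b6, b7, b8, b9, b10, b11, b12,
      b13, b14, b15, b16, b17, b18, c1, c2, c3, c4, c5, c6, c7, c8, c9, c10, c11, c12,
      c13, c14, c15, c16, c17, c18, vf_bracket, vf_add, vf_sub, vf_neg, hφ.vf]
      try abel
    have jq45 : φ ⁅φ ⁅X, φ Y⁆, Z⁆ = -φ ⁅Z, φ ⁅X, φ Y⁆⁆ := by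
      rw [show (⁅φ ⁅X, φ Y⁆, Z⁆ : Vec A) = -⁅Z, φ ⁅X, φ Y⁆⁆ from by
        simp only [Ring.lie_def, mul_sub, sub_mul, mul_assoc]; abel]
      simp (config := { maxDischargeDepth := 10 }) only [jq1, jq6, jq7, jq8, jq9, jq10, jq11, jq22, jq24, jq25, hφ.map_add, phi_sub hφ, phi_neg hφ, hφ.idem, lie_neg, neg_lie, lie_add, add_lie,
      lie_sub, sub_lie, hX, hY, hZ, hpX, hpY, hpZ, hXY, hXZ, hYZ, hYX, hZX, hZY, hpXY,
      hpXZ, hpYZ, hpYX, hpZX, hpZY, b1, b2, b3, b4, b5, b6, b7, b8, b9, b10, b11, b12,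
      b13, b14, b15, b16, b17, b18, c1, c2, c3, c4, c5, c6, c7, c8, c9, c10, c11, c12,
      c13, c14, c15, c16, c17, c18, vf_bracket, vf_add, vf_sub, vf_neg, hφ.vf]
      try abel
    have jq46 : φ ⁅φ ⁅Y, Z⁆, φ X⁆ = -φ ⁅φ X, φ ⁅Y, Z⁆⁆ := by
      rw [show (⁅φ ⁅Y, Z⁆, φ X⁆ : Vec A) = -⁅φ X, φ ⁅Y, Z⁆⁆ from by
        simp only [Ring.lie_def, mul_sub, sub_mul, mul_assoc]; abel]
      simp (config := { maxDischargeDepth := 10 }) only [jq1, jq6, jq7, jq8, jq9, jq10, jq11, jq22, jq24, jq25, hφ.map_add, phi_sub hφ, phi_neg hφ, hφ.idem, lie_neg, neg_lie, lie_add, add_lie,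
      lie_sub, sub_lie, hX, hY, hZ, hpX, hpY, hpZ, hXY, hXZ, hYZ, hYX, hZX, hZY, hpXY,
      hpXZ, hpYZ, hpYX, hpZX, hpZY, b1, b2, b3, b4, b5, b6, b7, b8, b9, b10, b11, b12,
      b13, b14, b15, b16, b17, b18, c1, c2, c3, c4, c5, c6, c7, c8, c9, c10, c11, c12,
      c13, c14, c15, c16, c17, c18, vf_bracket, vf_add, vf_sub, vf_neg, hφ.vf]
      try abel
    have jq47 : φ ⁅φ ⁅Y, φ Z⁆, X⁆ = -φ ⁅X, φ ⁅Y, φ Z⁆⁆ := by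
      rw [show (⁅φ ⁅Y, φ Z⁆, X⁆ : Vec A) = -⁅X, φ ⁅Y, φ Z⁆⁆ from by
        simp only [Ring.lie_def, mul_sub, sub_mul, mul_assoc]; abel]
      simp (config := { maxDischargeDepth := 10 }) only [jq1, jq6, jq7, jq8, jq9, jq10, jq11, jq22, jq24, jq25, hφ.map_add, phi_sub hφ, phi_neg hφ, hφ.idem, lie_neg, neg_lie, lie_add, add_lie,
      lie_sub, sub_lie, hX, hY, hZ, hpX, hpY, hpZ, hXY, hXZ, hYZ, hYX, hZX, hZY, hpXY,
      hpXZ, hpYZ, hpYX, hpZX, hpZY, b1, b2, b3, b4, b5, b6, b7, b8, b9, b10, b11, b12,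
      b13, b14, b15, b16, b17, b18, c1, c2, c3, c4, c5, c6, c7, c8, c9, c10, c11, c12,
      c13, c14, c15, c16, c17, c18, vf_bracket, vf_add, vf_sub, vf_neg, hφ.vf]
      try abel
    have jq48 : φ ⁅φ ⁅Z, X⁆, φ Y⁆ = φ ⁅φ Y, φ ⁅X, Z⁆⁆ := by
      rw [show (⁅φ ⁅Z, X⁆, φ Y⁆ : Vec A) = -⁅φ Y, φ ⁅Z, X⁆⁆ from by
        simp only [Ring.lie_def, mul_sub, sub_mul, mul_assoc]; abel]
      simp (config := { maxDischargeDepth := 10 }) only [jq1, jq6, jq7, jq8, jq9, jq10, jq11, jq22, jq24, jq25, hφ.map_add, phi_sub hφ, phi_neg hφ, hφ.idem, lie_neg, neg_lie, lie_add, add_lie,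
      lie_sub, sub_lie, hX, hY, hZ, hpX, hpY, hpZ, hXY, hXZ, hYZ, hYX, hZX, hZY, hpXY,
      hpXZ, hpYZ, hpYX, hpZX, hpZY, b1, b2, b3, b4, b5, b6, b7, b8, b9, b10, b11, b12,
      b13, b14, b15, b16, b17, b18, c1, c2, c3, c4, c5, c6, c7, c8, c9, c10, c11, c12,
      c13, c14, c15, c16, c17, c18, vf_bracket, vf_add, vf_sub, vf_neg, hφ.vf]
      try abel
    have jq49 : φ ⁅φ ⁅Z, φ X⁆, Y⁆ = -φ ⁅Y, φ ⁅Z, φ X⁆⁆ := by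
      rw [show (⁅φ ⁅Z, φ X⁆, Y⁆ : Vec A) = -⁅Y, φ ⁅Z, φ X⁆⁆ from by
        simp only [Ring.lie_def, mul_sub, sub_mul, mul_assoc]; abel]
      simp (config := { maxDischargeDepth := 10 }) only [jq1, jq6, jq7, jq8, jq9, jq10, jq11, jq22, jq24, jq25, hφ.map_add, phi_sub hφ, phi_neg hφ, hφ.idem, lie_neg, neg_lie, lie_add, add_lie,
      lie_sub, sub_lie, hX, hY, hZ, hpX, hpY, hpZ, hXY, hXZ, hYZ, hYX, hZX, hZY, hpXY,
      hpXZ, hpYZ, hpYX, hpZX, hpZY, b1, b2, b3, b4, b5, b6, b7, b8, b9, b10, b11, b12,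
      b13, b14, b15, b16, b17, b18, c1, c2, c3, c4, c5, c6, c7, c8, c9, c10, c11, c12,
      c13, c14, c15, c16, c17, c18, vf_bracket, vf_add, vf_sub, vf_neg, hφ.vf]
      try abel
    have jq50 : φ ⁅φ ⁅φ X, Y⁆, Z⁆ = φ ⁅Z, φ ⁅Y, φ X⁆⁆ := by
      rw [show (⁅φ ⁅φ X, Y⁆, Z⁆ : Vec A) = -⁅Z, φ ⁅φ X, Y⁆⁆ from by
        simp only [Ring.lie_def, mul_sub, sub_mul, mul_assoc]; abel]
      simp (config := { maxDischargeDepth := 10 }) only [jq1, jq6, jq7, jq8, jq9, jq10, jq11, jq22, jq24, jq25, hφ.map_add, phi_sub hφ, phi_neg hφ, hφ.idem, lie_neg, neg_lie, lie_add, add_lie,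
      lie_sub, sub_lie, hX, hY, hZ, hpX, hpY, hpZ, hXY, hXZ, hYZ, hYX, hZX, hZY, hpXY,
      hpXZ, hpYZ, hpYX, hpZX, hpZY, b1, b2, b3, b4, b5, b6, b7, b8, b9, b10, b11, b12,
      b13, b14, b15, b16, b17, b18, c1, c2, c3, c4, c5, c6, c7, c8, c9, c10, c11, c12,
      c13, c14, c15, c16, c17, c18, vf_bracket, vf_add, vf_sub, vf_neg, hφ.vf]
      try abel
    have jq51 : φ ⁅φ ⁅φ X, Z⁆, Y⁆ = φ ⁅Y, φ ⁅Z, φ X⁆⁆ := by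
      rw [show (⁅φ ⁅φ X, Z⁆, Y⁆ : Vec A) = -⁅Y, φ ⁅φ X, Z⁆⁆ from by
        simp only [Ring.lie_def, mul_sub, sub_mul, mul_assoc]; abel]
      simp (config := { maxDischargeDepth := 10 }) only [jq1, jq6, jq7, jq8, jq9, jq10, jq11, jq22, jq24, jq25, hφ.map_add, phi_sub hφ, phi_neg hφ, hφ.idem, lie_neg, neg_lie, lie_add, add_lie,
      lie_sub, sub_lie, hX, hY, hZ, hpX, hpY, hpZ, hXY, hXZ, hYZ, hYX, hZX, hZY, hpXY,
      hpXZ, hpYZ, hpYX, hpZX, hpZY, b1, b2, b3, b4, b5, b6, b7, b8, b9, b10, b11, b12,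
      b13, b14, b15, b16, b17, b18, c1, c2, c3, c4, c5, c6, c7, c8, c9, c10, c11, c12,
      c13, c14, c15, c16, c17, c18, vf_bracket, vf_add, vf_sub, vf_neg, hφ.vf]
      try abel
    have jq52 : φ ⁅φ ⁅φ Y, X⁆, Z⁆ = φ ⁅Z, φ ⁅X, φ Y⁆⁆ := by
      rw [show (⁅φ ⁅φ Y, X⁆, Z⁆ : Vec A) = -⁅Z, φ ⁅φ Y, X⁆⁆ from by
        simp only [Ring.lie_def, mul_sub, sub_mul, mul_assoc]; abel]
      simp (config := { maxDischargeDepth := 10 }) only [jq1, jq6, jq7, jq8, jq9, jq10, jq11, jq22, jq24, jq25, hφ.map_add, phi_sub hφ, phi_neg hφ, hφ.idem, lie_neg, neg_lie, lie_add, add_lie,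
      lie_sub, sub_lie, hX, hY, hZ, hpX, hpY, hpZ, hXY, hXZ, hYZ, hYX, hZX, hZY, hpXY,
      hpXZ, hpYZ, hpYX, hpZX, hpZY, b1, b2, b3, b4, b5, b6, b7, b8, b9, b10, b11, b12,
      b13, b14, b15, b16, b17, b18, c1, c2, c3, c4, c5, c6, c7, c8, c9, c10, c11, c12,
      c13, c14, c15, c16, c17, c18, vf_bracket, vf_add, vf_sub, vf_neg, hφ.vf]
      try abel
    have jq53 : φ ⁅φ ⁅φ Y, Z⁆, X⁆ = φ ⁅X, φ ⁅Z, φ Y⁆⁆ := by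
      rw [show (⁅φ ⁅φ Y, Z⁆, X⁆ : Vec A) = -⁅X, φ ⁅φ Y, Z⁆⁆ from by
        simp only [Ring.lie_def, mul_sub, sub_mul, mul_assoc]; abel]
      simp (config := { maxDischargeDepth := 10 }) only [jq1, jq6, jq7, jq8, jq9, jq10, jq11, jq22, jq24, jq25, hφ.map_add, phi_sub hφ, phi_neg hφ, hφ.idem, lie_neg, neg_lie, lie_add, add_lie,
      lie_sub, sub_lie, hX, hY, hZ, hpX, hpY, hpZ, hXY, hXZ, hYZ, hYX, hZX, hZY, hpXY,
      hpXZ, hpYZ, hpYX, hpZX, hpZY, b1, b2, b3, b4, b5, b6, b7, b8, b9, b10, b11, b12,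
      b13, b14, b15, b16, b17, b18, c1, c2, c3, c4, c5, c6, c7, c8, c9, c10, c11, c12,
      c13, c14, c15, c16, c17, c18, vf_bracket, vf_add, vf_sub, vf_neg, hφ.vf]
      try abel
    have jq54 : φ ⁅φ ⁅φ Z, X⁆, Y⁆ = φ ⁅Y, φ ⁅X, φ Z⁆⁆ := by
      rw [show (⁅φ ⁅φ Z, X⁆, Y⁆ : Vec A) = -⁅Y, φ ⁅φ Z, X⁆⁆ from by
        simp only [Ring.lie_def, mul_sub, sub_mul, mul_assoc]; abel]
      simp (config := { maxDischargeDepth := 10 }) only [jq1, jq6, jq7, jq8, jq9, jq10, jq11, jq22, jq24, jq25, hφ.map_add, phi_sub hφ, phi_neg hφ, hφ.idem, lie_neg, neg_lie, lie_add, add_lie,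
      lie_sub, sub_lie, hX, hY, hZ, hpX, hpY, hpZ, hXY, hXZ, hYZ, hYX, hZX, hZY, hpXY,
      hpXZ, hpYZ, hpYX, hpZX, hpZY, b1, b2, b3, b4, b5, b6, b7, b8, b9, b10, b11, b12,
      b13, b14, b15, b16, b17, b18, c1, c2, c3, c4, c5, c6, c7, c8, c9, c10, c11, c12,
      c13, c14, c15, c16, c17, c18, vf_bracket, vf_add, vf_sub, vf_neg, hφ.vf]
      try abel
    have jq55 : φ ⁅φ ⁅φ Z, Y⁆, X⁆ = φ ⁅X, φ ⁅Y, φ Z⁆⁆ := by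
      rw [show (⁅φ ⁅φ Z, Y⁆, X⁆ : Vec A) = -⁅X, φ ⁅φ Z, Y⁆⁆ from by
        simp only [Ring.lie_def, mul_sub, sub_mul, mul_assoc]; abel]
      simp (config := { maxDischargeDepth := 10 }) only [jq1, jq6, jq7, jq8, jq9, jq10, jq11, jq22, jq24, jq25, hφ.map_add, phi_sub hφ, phi_neg hφ, hφ.idem, lie_neg, neg_lie, lie_add, add_lie,
      lie_sub, sub_lie, hX, hY, hZ, hpX, hpY, hpZ, hXY, hXZ, hYZ, hYX, hZX, hZY, hpXY,
      hpXZ, hpYZ, hpYX, hpZX, hpZY, b1, b2, b3, b4, b5, b6, b7, b8, b9, b10, b11, b12,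
      b13, b14, b15, b16, b17, b18, c1, c2, c3, c4, c5, c6, c7, c8, c9, c10, c11, c12,
      c13, c14, c15, c16, c17, c18, vf_bracket, vf_add, vf_sub, vf_neg, hφ.vf]
      try abel
    simp only [jq2, jq3, jq4, jq5, jq12, jq13, jq14, jq15, jq16, jq17, jq18, jq19, jq20, jq21, jq23, jq26, jq27, jq28, jq29, jq30, jq31, jq32, jq33, jq34, jq35, jq36, jq37, jq38, jq39, jq40, jq41, jq42, jq43, jq44, jq45, jq46, jq47, jq48, jq49, jq50, jq51, jq52, jq53, jq54, jq55]
    simp only [jq1, jq6, jq7, jq8, jq9, jq10, jq11, jq22, jq24, jq25, LinearMap.add_apply, LinearMap.sub_apply,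
      LinearMap.neg_apply, map_add, map_sub, map_neg]
    abel

end Conn
end Work10
section Final
variable {A : Type*} [CommRing A] [Algebra ℝ A]

theorem bianchi_general {φ : Vec A → Vec A} (hφ : IsConnection A φ) :
    VEq A (fnb A 2 1 (curv A φ + cocurv A φ) (oneF A φ)) 0 := by
  intro ℓ hl
  show fnb A 2 1 (curv A φ + cocurv A φ) (oneF A φ) ℓ = (0 : Vec A)
  apply LinearMap.ext
  intro f
  rw [fnb_apply, LinearMap.zero_apply]
  rw [theta_congr (Kv_vflist hφ) (L1 hφ f) ℓ hl,
    theta_congr (oneF_vflist hφ) (L3 hφ f) ℓ hl,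
    L5 hφ f ℓ hl]
  norm_num
end Final
/-- **Bianchi identity, first part** (Lemma 1.4).  For any connection `φ` for a sub
vector bundle `F ⊆ TM` of a smooth manifold `M`, with curvature `R` and cocurvature `R̄`,
the Frölicher–Nijenhuis bracket satisfies `[R + R̄, φ] = 0`. -/
theorem bianchi_identity_first_part
    {EM : Type*} [NormedAddCommGroup EM] [NormedSpace ℝ EM]
    {HM : Type*} [TopologicalSpace HM] {IM : ModelWithCorners ℝ EM HM}
    {M : Type*} [TopologicalSpace M] [ChartedSpace HM M] [IsManifold IM (⊤ : ℕ∞) M]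
    (φ : Vec (SmoothFns IM M) → Vec (SmoothFns IM M))
    (hφ : IsConnection (SmoothFns IM M) φ) :
    VEq (SmoothFns IM M)
      (fnb (SmoothFns IM M) 2 1 (curv (SmoothFns IM M) φ + cocurv (SmoothFns IM M) φ) (oneF (SmoothFns IM M) φ))
      0 := by
  exact bianchi_general hφ
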